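/- arXiv:2509.09353 — 2 statements merged into one kernel-verified Lean document; each statement's English description precedes it below -/
import Mathlib

section
/- There exists a universal constant c₀ ≥ 4 such that the following holds in the hidden-subclique model (HS-I) with q = 1/2, assuming (λk/√(q̄n)) ∨ (λ/√q̄) ∨ (k/n) ≤ D^{−8c₀}: let G^{(1)}, G^{(2)} be templates with at most D edges, with connected components G^{(1)}_1,…,G^{(1)}_{cc₁} and G^{(2)}_1,…,G^{(2)}_{cc₂}, let M ∈ 𝓜* be a matching and (π^{(1)},π^{(2)}) ∈ Π(M). Then for all subsets S₁ ⊆ {1,…,cc₁} and S₂ ⊆ {1,…,cc₂}: 0 ≤ E[∏_{i∈{1,…,cc₁}∖S₁} P_{G^{(1)}_i,π^{(1)}}(Y) · ∏_{i∈{1,…,cc₂}∖S₂} P_{G^{(2)}_i,π^{(2)}}(Y)] · E[∏_{i∈S₁} P_{G^{(1)}_i,π^{(1)}}(Y)] · E[∏_{i∈S₂} P_{G^{(2)}_i,π^{(2)}}(Y)] ≤ (k/n)^{(|S₁|+|S₂|)/2} · E[P_{G^{(1)},π^{(1)}}(Y)·P_{G^{(2)},π^{(2)}}(Y)]. -/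
open Finset MeasureTheory
open scoped Classical

noncomputable section

namespace LDLB

abbrev Idx (n : ℕ) := {p : Fin n × Fin n // p.1 < p.2}
abbrev Obs (n : ℕ) := Idx n → ℝ

def edgeVal {n : ℕ} (Y : Obs n) (i j : Fin n) : ℝ :=
  if h : i = j then 0 else Y ⟨(min i j, max i j), min_lt_max.mpr h⟩

lemma edgeVal_symm {n : ℕ} (Y : Obs n) (i j : Fin n) : edgeVal Y i j = edgeVal Y j i := by
  by_cases h : i = j
  · subst h; rfl
  · have h' : ¬ j = i := fun hji => h hji.symm
    unfold edgeVal
    rw [dif_neg h, dif_neg h']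
    congr 1
    refine Subtype.ext ?_
    simp only []
    rw [min_comm i j, max_comm i j]

def edgeValSym {n : ℕ} (Y : Obs n) : Sym2 (Fin n) → ℝ :=
  Sym2.lift ⟨fun i j => edgeVal Y i j, fun i j => edgeVal_symm Y i j⟩

def monoE {n m : ℕ} (Ed : Finset (Sym2 (Fin m))) (π : Fin m → Fin n) : Obs n → ℝ :=
  fun Y => ∏ e ∈ Ed, edgeValSym Y (e.map π)

structure Graf where
  m : ℕ
  Ed : Finset (Sym2 (Fin m))
  not_diag : ∀ e ∈ Ed, ¬ e.IsDiag

def Graf.graph (G : Graf) : SimpleGraph (Fin G.m) where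
  Adj u v := u ≠ v ∧ s(u, v) ∈ G.Ed
  symm := by
    constructor
    intro u v h
    exact ⟨h.1.symm, by rw [Sym2.eq_swap]; exact h.2⟩
  loopless := by constructor; intro v h; exact h.1 rfl

def Graf.IsTemplate (G : Graf) : Prop := ∀ v : Fin G.m, ∃ e ∈ G.Ed, v ∈ e

def Graf.compOf (G : Graf) (v : Fin G.m) : Finset (Sym2 (Fin G.m)) :=
  G.Ed.filter (fun e => ∀ w ∈ e, G.graph.Reachable v w)

def Graf.comps (G : Graf) : Finset (Finset (Sym2 (Fin G.m))) :=
  (Finset.univ.image G.compOf).filter (fun C => C.Nonempty)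

def Graf.ccCount (G : Graf) : ℕ :=
  (Finset.univ.image (fun v => G.graph.connectedComponentMk v)).card

def Graf.autCard (G : Graf) : ℕ :=
  (Finset.univ.filter (fun σ : Equiv.Perm (Fin G.m) =>
    ∀ e : Sym2 (Fin G.m), e.map σ ∈ G.Ed ↔ e ∈ G.Ed)).card

def Graf.Iso (G₁ G₂ : Graf) : Prop :=
  ∃ σ : Fin G₁.m ≃ Fin G₂.m, ∀ e : Sym2 (Fin G₁.m), e.map σ ∈ G₂.Ed ↔ e ∈ G₁.Ed

structure IsFamily (D : ℕ) (𝒢 : Finset Graf) : Prop where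
  templ : ∀ G ∈ 𝒢, G.IsTemplate
  edges_lb : ∀ G ∈ 𝒢, 1 ≤ G.Ed.card
  edges_ub : ∀ G ∈ 𝒢, G.Ed.card ≤ D
  pairwise_noniso : ∀ G₁ ∈ 𝒢, ∀ G₂ ∈ 𝒢, G₁ ≠ G₂ → ¬ G₁.Iso G₂
  maximal : ∀ G : Graf, G.IsTemplate → 1 ≤ G.Ed.card → G.Ed.card ≤ D →
    ∃ G' ∈ 𝒢, G.Iso G'

structure Model (n : ℕ) where
  q : ℝ
  Θ : Fin n → Fin n → ℝ
  wz : (Fin n → Fin n) → ℝ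

def Model.qbar {n : ℕ} (M : Model n) : ℝ := M.q * (1 - M.q)

def bern (p : ℝ) (b : Bool) : ℝ := if b then p else 1 - p

def obsIdx {n : ℕ} (q : ℝ) (y : Fin n → Fin n → Bool) : Obs n :=
  fun p => (if y p.1.1 p.1.2 then (1 : ℝ) else 0) - q

def wObsA {n : ℕ} (q : ℝ) (A : Fin n → Fin n → ℝ) (y : Fin n → Fin n → Bool) : ℝ :=
  ∏ i : Fin n, ∏ j : Fin n, if i < j then bern (q + A i j) (y i j) else (1 / 2 : ℝ)

def wObs {n : ℕ} (q : ℝ) (Θ : Fin n → Fin n → ℝ) (z : Fin n → Fin n) :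
    (Fin n → Fin n → Bool) → ℝ :=
  wObsA q (fun i j => Θ (z i) (z j))

def Model.EOm {n : ℕ} (M : Model n) (f : (Fin n → Fin n) → (Fin n → Fin n → Bool) → ℝ) : ℝ :=
  ∑ z : Fin n → Fin n, ∑ y : Fin n → Fin n → Bool,
    M.wz z * wObs M.q M.Θ z y * f z y

def Model.E {n : ℕ} (M : Model n) (f : Obs n → ℝ) : ℝ :=
  M.EOm (fun _ y => f (obsIdx M.q y))

def wIndep (n : ℕ) : (Fin n → Fin n) → ℝ := fun _ => ((n : ℝ) ^ n)⁻¹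

def wPerm (n : ℕ) : (Fin n → Fin n) → ℝ :=
  fun z => if Function.Bijective z then ((n.factorial : ℝ))⁻¹ else 0

def injs (m n : ℕ) : Finset (Fin m → Fin n) :=
  Finset.univ.filter (fun π => Function.Injective π)

def cmono {n : ℕ} (M : Model n) (G : Graf) (π : Fin G.m → Fin n) (Y : Obs n) : ℝ :=
  ∏ C ∈ G.comps, (monoE C π Y - M.E (monoE C π))

def Pbar {n : ℕ} (M : Model n) (G : Graf) (Y : Obs n) : ℝ :=
  ∑ π ∈ injs G.m n, cmono M G π Y

def Vproxy {n : ℕ} (M : Model n) (G : Graf) : ℝ :=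
  (n.descFactorial G.m : ℝ) * (G.autCard : ℝ) * M.qbar ^ G.Ed.card

def Psi {n : ℕ} (M : Model n) (G : Graf) (Y : Obs n) : ℝ :=
  Pbar M G Y / Real.sqrt (Vproxy M G)

/-! ### Parameters, the six models -/

/-- Base constraints on the parameters. -/
def Params (n k : ℕ) (q lam : ℝ) : Prop :=
  2 ≤ n ∧ 1 ≤ k ∧ k ≤ n ∧ 0 < q ∧ q ≤ 1 / 2 ∧ 0 ≤ lam ∧ lam ≤ 1 - q

/-- The signal size `(k/n) ∨ (λ k / √(n q)) ∨ (λ/q)`. -/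
def signal (n k : ℕ) (q lam : ℝ) : ℝ :=
  max (max ((k : ℝ) / n) (lam * k / Real.sqrt (n * q))) (lam / q)

/-- Hidden subclique signal matrix. -/
def thetaHS (n k : ℕ) (lam : ℝ) : Fin n → Fin n → ℝ :=
  fun i j => if i.val < k ∧ j.val < k then lam else 0

/-- Stochastic block model signal matrix (blocks of size `k`). -/
def thetaSBM (n k : ℕ) (lam : ℝ) : Fin n → Fin n → ℝ :=
  fun i j => if i.val / k = j.val / k then lam else 0

/-- Toeplitz seriation signal matrix (bandwidth `k/2`). -/
def thetaTS (n k : ℕ) (lam : ℝ) : Fin n → Fin n → ℝ :=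
  fun i j => if |(i.val : ℤ) - (j.val : ℤ)| ≤ ((k / 2 : ℕ) : ℤ) then lam else 0

/-- `M` is one of the six models (HS-I), (HS-P), (SBM-I), (SBM-P), (TS-I), (TS-P). -/
def IsSix (n k : ℕ) (q lam : ℝ) (M : Model n) : Prop :=
  M.q = q ∧ (M.wz = wIndep n ∨ M.wz = wPerm n) ∧
    (M.Θ = thetaHS n k lam ∨ (k ∣ n ∧ M.Θ = thetaSBM n k lam) ∨
      (2 ∣ k ∧ M.Θ = thetaTS n k lam))

/-! ### Pinned templates -/

/-- A pinned template: a graph with two distinguished distinct vertices `v1, v2` (which may be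
isolated) and no other isolated vertex. -/
structure PGraf where
  m : ℕ
  Ed : Finset (Sym2 (Fin m))
  not_diag : ∀ e ∈ Ed, ¬ e.IsDiag
  v1 : Fin m
  v2 : Fin m
  hne : v1 ≠ v2
  no_isolated : ∀ v : Fin m, v ≠ v1 → v ≠ v2 → ∃ e ∈ Ed, v ∈ e

/-- Underlying unpinned graph. -/
def PGraf.G (P : PGraf) : Graf := ⟨P.m, P.Ed, P.not_diag⟩

/-- Injections sending the distinguished vertices to the nodes `1` and `2`
(i.e. to `0` and `1` in `Fin n`). -/
def pinjs (P : PGraf) (n : ℕ) : Finset (Fin P.m → Fin n) :=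
  Finset.univ.filter
    (fun π => Function.Injective π ∧ (π P.v1).val = 0 ∧ (π P.v2).val = 1)

/-- `P̄^{(1,2)}_G`. -/
def PbarP {n : ℕ} (M : Model n) (P : PGraf) (Y : Obs n) : ℝ :=
  ∑ π ∈ pinjs P n, cmono M P.G π Y

/-- Number of automorphisms fixing the two distinguished vertices. -/
def PGraf.autCard (P : PGraf) : ℕ :=
  (Finset.univ.filter (fun σ : Equiv.Perm (Fin P.m) =>
    (∀ e : Sym2 (Fin P.m), e.map σ ∈ P.Ed ↔ e ∈ P.Ed) ∧ σ P.v1 = P.v1 ∧ σ P.v2 = P.v2)).card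

/-- `𝕍^{(1,2)}(G)`. -/
def VproxyP {n : ℕ} (M : Model n) (P : PGraf) : ℝ :=
  ((n - 2).descFactorial (P.m - 2) : ℝ) * (P.autCard : ℝ) * M.qbar ^ P.Ed.card

/-- `Ψ^{(1,2)}_G`. -/
def PsiP {n : ℕ} (M : Model n) (P : PGraf) (Y : Obs n) : ℝ :=
  PbarP M P Y / Real.sqrt (VproxyP M P)

/-- Equivalence of pinned templates. -/
def PGraf.Equiv (P₁ P₂ : PGraf) : Prop :=
  ∃ σ : Fin P₁.m ≃ Fin P₂.m,
    (∀ e : Sym2 (Fin P₁.m), e.map σ ∈ P₂.Ed ↔ e ∈ P₁.Ed) ∧ σ P₁.v1 = P₂.v1 ∧ σ P₁.v2 = P₂.v2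

/-- A maximal family of pairwise non-equivalent pinned templates with between 1 and `D` edges. -/
structure IsPFamily (D : ℕ) (Pfam : Finset PGraf) : Prop where
  edges_lb : ∀ P ∈ Pfam, 1 ≤ P.Ed.card
  edges_ub : ∀ P ∈ Pfam, P.Ed.card ≤ D
  pairwise_nonequiv : ∀ P₁ ∈ Pfam, ∀ P₂ ∈ Pfam, P₁ ≠ P₂ → ¬ P₁.Equiv P₂
  maximal : ∀ P : PGraf, 1 ≤ P.Ed.card → P.Ed.card ≤ D → ∃ P' ∈ Pfam, P.Equiv P'

/-! ### Polynomials, advantage, correlation -/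

/-- Evaluation of a polynomial in the variables `(Y_{ij})_{i<j}`. -/
def evalPoly {n : ℕ} (f : MvPolynomial (Idx n) ℝ) (Y : Obs n) : ℝ :=
  MvPolynomial.eval Y f

/-- The estimation target `x = 1{Θ_{z₁ z₂} ≠ 0}`. -/
def xVal {n : ℕ} (M : Model n) (z : Fin n → Fin n) : ℝ :=
  if h : 1 < n then
    (if M.Θ (z ⟨0, by omega⟩) (z ⟨1, h⟩) ≠ 0 then 1 else 0)
  else 0

/-- Low-degree correlation `Corr_{≤ D}` for estimating `x`. -/
def Corr {n : ℕ} (M : Model n) (D : ℕ) : ℝ :=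
  sSup {r : ℝ | ∃ f : MvPolynomial (Idx n) ℝ, f.totalDegree ≤ D ∧
    0 < M.E (fun Y => (evalPoly f Y) ^ 2) ∧
    r = M.EOm (fun z y => evalPoly f (obsIdx M.q y) * xVal M z) /
        Real.sqrt (M.E (fun Y => (evalPoly f Y) ^ 2))}

/-- Low-degree advantage `Adv_{≤ D}`, for an alternative expectation functional `E1`. -/
def Adv {n : ℕ} (M : Model n) (E1 : (Obs n → ℝ) → ℝ) (D : ℕ) : ℝ :=
  sSup {r : ℝ | ∃ f : MvPolynomial (Idx n) ℝ, f.totalDegree ≤ D ∧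
    0 < M.E (fun Y => (evalPoly f Y) ^ 2) ∧
    r = E1 (evalPoly f) / Real.sqrt (M.E (fun Y => (evalPoly f Y) ^ 2))}

/-! ### The altered distributions -/

/-- The altered mean matrix: the rows and columns of nodes `i` in the target set whose coin `b i`
came up are set to zero. -/
def altMat {n : ℕ} (Θ : Fin n → Fin n → ℝ) (z : Fin n → Fin n) (T : Fin n → Prop)
    (b : Fin n → Bool) : Fin n → Fin n → ℝ :=
  fun i j => if (T i ∧ b i = true) ∨ (T j ∧ b j = true) then 0 else Θ (z i) (z j)

/-- Expectation under the altered distribution `P_{H1}`: an auxiliary uniform label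
`l ∈ Fin L` is drawn, each node `i` of the target set `T z l` is erased independently with
probability `ε`, and the graph is drawn with the altered mean matrix. -/
def Model.EH1 {n : ℕ} (M : Model n) (L : ℕ)
    (T : (Fin n → Fin n) → Fin L → Fin n → Prop) (ε : ℝ) (f : Obs n → ℝ) : ℝ :=
  ∑ z : Fin n → Fin n, ∑ l : Fin L, ∑ b : Fin n → Bool, ∑ y : Fin n → Fin n → Bool,
    M.wz z * (L : ℝ)⁻¹ * (∏ i : Fin n, bern ε (b i)) *
      wObsA M.q (altMat M.Θ z (T z l) b) y * f (obsIdx M.q y)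

/-! ### Matchings between two templates and labeled merged graphs -/

/-- A matching: a set of pairs of nodes in which no node appears twice. -/
def IsMatching {m₁ m₂ : ℕ} (Mm : Finset (Fin m₁ × Fin m₂)) : Prop :=
  ∀ p ∈ Mm, ∀ p' ∈ Mm, (p.1 = p'.1 ↔ p.2 = p'.2)

/-- An edge of `G₁` is matched by `Mm`. -/
def matched1 (G₁ G₂ : Graf) (Mm : Finset (Fin G₁.m × Fin G₂.m)) (e : Sym2 (Fin G₁.m)) : Prop :=
  ∃ p ∈ Mm, ∃ p' ∈ Mm, e = s(p.1, p'.1) ∧ s(p.2, p'.2) ∈ G₂.Ed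

/-- An edge of `G₂` is matched by `Mm`. -/
def matched2 (G₁ G₂ : Graf) (Mm : Finset (Fin G₁.m × Fin G₂.m)) (e : Sym2 (Fin G₂.m)) : Prop :=
  ∃ p ∈ Mm, ∃ p' ∈ Mm, e = s(p.2, p'.2) ∧ s(p.1, p'.1) ∈ G₁.Ed

/-- A pair of the matching is perfectly matched. -/
def pairPerfect (G₁ G₂ : Graf) (Mm : Finset (Fin G₁.m × Fin G₂.m))
    (p : Fin G₁.m × Fin G₂.m) : Prop :=
  (∀ e ∈ G₁.Ed, p.1 ∈ e → matched1 G₁ G₂ Mm e) ∧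
  (∀ e ∈ G₂.Ed, p.2 ∈ e → matched2 G₁ G₂ Mm e)

/-- The semi-matched pairs `M_SM(M)`. -/
def Msm (G₁ G₂ : Graf) (Mm : Finset (Fin G₁.m × Fin G₂.m)) : Finset (Fin G₁.m × Fin G₂.m) :=
  Mm.filter (fun p => ¬ pairPerfect G₁ G₂ Mm p)

/-- The unmatched nodes `U^{(1)}(M)` of `G₁`. -/
def Uset1 (G₁ G₂ : Graf) (Mm : Finset (Fin G₁.m × Fin G₂.m)) : Finset (Fin G₁.m) :=
  Finset.univ.filter (fun v => ∀ p ∈ Mm, p.1 ≠ v)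

/-- The unmatched nodes `U^{(2)}(M)` of `G₂`. -/
def Uset2 (G₁ G₂ : Graf) (Mm : Finset (Fin G₁.m × Fin G₂.m)) : Finset (Fin G₂.m) :=
  Finset.univ.filter (fun v => ∀ p ∈ Mm, p.2 ≠ v)

/-- `Mm` is a perfect matching (`Mm ∈ 𝓜_PM`). -/
def IsPerfectM (G₁ G₂ : Graf) (Mm : Finset (Fin G₁.m × Fin G₂.m)) : Prop :=
  Uset1 G₁ G₂ Mm = ∅ ∧ Uset2 G₁ G₂ Mm = ∅ ∧ Msm G₁ G₂ Mm = ∅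

/-- `Mm ∈ 𝓜*`: every connected component of `G₁` and of `G₂` meets the matching. -/
def InMstar (G₁ G₂ : Graf) (Mm : Finset (Fin G₁.m × Fin G₂.m)) : Prop :=
  (∀ v : Fin G₁.m, ∃ p ∈ Mm, G₁.graph.Reachable p.1 v) ∧
  (∀ v : Fin G₂.m, ∃ p ∈ Mm, G₂.graph.Reachable p.2 v)

/-- `(π₁, π₂) ∈ Π(M)`: injections compatible with exactly the matching `Mm`. -/
def InPi {n : ℕ} (G₁ G₂ : Graf) (Mm : Finset (Fin G₁.m × Fin G₂.m))
    (π₁ : Fin G₁.m → Fin n) (π₂ : Fin G₂.m → Fin n) : Prop :=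
  Function.Injective π₁ ∧ Function.Injective π₂ ∧
    ∀ (v : Fin G₁.m) (v' : Fin G₂.m), (π₁ v = π₂ v' ↔ (v, v') ∈ Mm)

/-- Labeled edge set of `G[π]`. -/
def lE {n : ℕ} (G : Graf) (π : Fin G.m → Fin n) : Finset (Sym2 (Fin n)) :=
  G.Ed.image (Sym2.map π)

/-- Labeled intersection edge set `E_∩`. -/
def lEcap {n : ℕ} (G₁ G₂ : Graf) (π₁ : Fin G₁.m → Fin n) (π₂ : Fin G₂.m → Fin n) :
    Finset (Sym2 (Fin n)) :=
  lE G₁ π₁ ∩ lE G₂ π₂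

/-- Labeled union edge set `E_∪`. -/
def lEcup {n : ℕ} (G₁ G₂ : Graf) (π₁ : Fin G₁.m → Fin n) (π₂ : Fin G₂.m → Fin n) :
    Finset (Sym2 (Fin n)) :=
  lE G₁ π₁ ∪ lE G₂ π₂

/-- Labeled symmetric-difference edge set `E_Δ`. -/
def lEdel {n : ℕ} (G₁ G₂ : Graf) (π₁ : Fin G₁.m → Fin n) (π₂ : Fin G₂.m → Fin n) :
    Finset (Sym2 (Fin n)) :=
  lEcup G₁ G₂ π₁ π₂ \ lEcap G₁ G₂ π₁ π₂

/-- Nodes incident to a set of labeled edges. -/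
def vertsOf {n : ℕ} (F : Finset (Sym2 (Fin n))) : Finset (Fin n) :=
  Finset.univ.filter (fun v => ∃ e ∈ F, v ∈ e)

/-- The simple graph with the given labeled edge set. -/
def graphOf {n : ℕ} (F : Finset (Sym2 (Fin n))) : SimpleGraph (Fin n) where
  Adj u v := u ≠ v ∧ s(u, v) ∈ F
  symm := by
    constructor
    intro u v h
    exact ⟨h.1.symm, by rw [Sym2.eq_swap]; exact h.2⟩
  loopless := by constructor; intro v h; exact h.1 rfl

/-- Number of connected components of a labeled edge set. -/
def ccOf {n : ℕ} (F : Finset (Sym2 (Fin n))) : ℕ :=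
  ((vertsOf F).image (fun v => (graphOf F).connectedComponentMk v)).card

/-- Vertex set of the connected component of `v` in a labeled edge set. -/
def compSetOf {n : ℕ} (F : Finset (Sym2 (Fin n))) (v : Fin n) : Finset (Fin n) :=
  (vertsOf F).filter (fun w => (graphOf F).Reachable v w)

/-- The (vertex sets of the) pure connected components of `G_Δ`: those lying entirely in
`π₁(V₁) \ π₂(V₂)`, or entirely in `π₂(V₂) \ π₁(V₁)`. -/
def pureParts {n : ℕ} (G₁ G₂ : Graf) (π₁ : Fin G₁.m → Fin n) (π₂ : Fin G₂.m → Fin n) :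
    Finset (Finset (Fin n)) :=
  ((vertsOf (lEdel G₁ G₂ π₁ π₂)).image (compSetOf (lEdel G₁ G₂ π₁ π₂))).filter
    (fun s => (∀ v ∈ s, v ∈ Finset.univ.image π₁ ∧ v ∉ Finset.univ.image π₂) ∨
              (∀ v ∈ s, v ∈ Finset.univ.image π₂ ∧ v ∉ Finset.univ.image π₁))

/-- `#CC_pure`. -/
def ccPure {n : ℕ} (G₁ G₂ : Graf) (π₁ : Fin G₁.m → Fin n) (π₂ : Fin G₂.m → Fin n) : ℕ :=
  (pureParts G₁ G₂ π₁ π₂).card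

/-- The remaining nodes `ω₀` of `G_∪`. -/
def restPart {n : ℕ} (G₁ G₂ : Graf) (π₁ : Fin G₁.m → Fin n) (π₂ : Fin G₂.m → Fin n) :
    Finset (Fin n) :=
  (vertsOf (lEcup G₁ G₂ π₁ π₂)).filter (fun v => ∀ s ∈ pureParts G₁ G₂ π₁ π₂, v ∉ s)

/-- The vertex classes `ω₀, ω₁, …` of the contracted graph `𝒩[z; G_∪]`. -/
def omegaParts {n : ℕ} (G₁ G₂ : Graf) (π₁ : Fin G₁.m → Fin n) (π₂ : Fin G₂.m → Fin n) :
    Finset (Finset (Fin n)) :=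
  if (restPart G₁ G₂ π₁ π₂).Nonempty then
    insert (restPart G₁ G₂ π₁ π₂) (pureParts G₁ G₂ π₁ π₂)
  else pureParts G₁ G₂ π₁ π₂

/-- The contracted graph `𝒩[z; G_∪]` is connected: parts are joined by sharing latent values. -/
def partsConn {n : ℕ} (parts : Finset (Finset (Fin n))) (z : Fin n → Fin n) : Prop :=
  ∀ s ∈ parts, ∀ t ∈ parts,
    Relation.ReflTransGen
      (fun a b : Finset (Fin n) => a ∈ parts ∧ b ∈ parts ∧ ∃ i ∈ a, ∃ j ∈ b, z i = z j) s t

/-! ### Generic conditions -/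

/-- `p̄ = p (1-q)² + (1-p) q²` with `p = λ + q`. -/
def pbarOf (q lam : ℝ) : ℝ := (lam + q) * (1 - q) ^ 2 + (1 - (lam + q)) * q ^ 2

/-- Condition C-Signal. -/
def CSignal (n k D : ℕ) (q lam cs : ℝ) : Prop :=
  signal n k q lam ≤ (D : ℝ) ^ (-(8 * cs))

/-- Condition C-Moment. -/
def CMoment {n : ℕ} (M : Model n) (k D : ℕ) (lam cm : ℝ) : Prop :=
  ∀ G : Graf, G.IsTemplate → G.Ed.card ≤ D →
    ∀ π : Fin G.m → Fin n, Function.Injective π →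
      |M.E (monoE G.Ed π)| ≤
        ((D : ℝ) ^ cm * lam) ^ G.Ed.card * ((D : ℝ) ^ cm * k / n) ^ (G.m - G.ccCount)

/-- Condition C-Variance (relative to a family of templates). -/
def CVariance {n : ℕ} (M : Model n) (k D : ℕ) (lam c1 c2 c3 c4 : ℝ)
    (𝒢 : Finset Graf) : Prop :=
  (∀ G₁ ∈ 𝒢, ∀ G₂ ∈ 𝒢, ∀ Mm : Finset (Fin G₁.m × Fin G₂.m),
      IsMatching Mm → ¬ IsPerfectM G₁ G₂ Mm →
      ∀ (π₁ : Fin G₁.m → Fin n) (π₂ : Fin G₂.m → Fin n), InPi G₁ G₂ Mm π₁ π₂ →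
        |M.E (fun Y => monoE G₁.Ed π₁ Y * monoE G₂.Ed π₂ Y)| ≤
          c2 * ((D : ℝ) ^ c1 * lam) ^ (lEdel G₁ G₂ π₁ π₂).card *
            pbarOf M.q lam ^ (lEcap G₁ G₂ π₁ π₂).card *
            ((D : ℝ) ^ c1 * k / n) ^
              ((vertsOf (lEdel G₁ G₂ π₁ π₂)).card - ccOf (lEdel G₁ G₂ π₁ π₂))) ∧
  (∀ G ∈ 𝒢, ∀ π : Fin G.m → Fin n, Function.Injective π →
      |M.E (fun Y => (monoE G.Ed π Y) ^ 2) - M.qbar ^ G.Ed.card| ≤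
        c3 * (D : ℝ) ^ (-c4) * M.qbar ^ G.Ed.card)

/-- The companion Independent-Sampling model (same `q` and `Θ`). -/
def indepOf {n : ℕ} (M : Model n) : Model n := ⟨M.q, M.Θ, wIndep n⟩

/-- Condition C-Variance-Permutation (relative to a family of templates). -/
def CVarPerm {n : ℕ} (M : Model n) (k D : ℕ) (lam cd1 cd2 : ℝ)
    (𝒢 : Finset Graf) : Prop :=
  ∀ G₁ ∈ 𝒢, ∀ G₂ ∈ 𝒢, ∀ Mm : Finset (Fin G₁.m × Fin G₂.m),
    IsMatching Mm → ¬ IsPerfectM G₁ G₂ Mm →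
    ∀ (π₁ : Fin G₁.m → Fin n) (π₂ : Fin G₂.m → Fin n), InPi G₁ G₂ Mm π₁ π₂ →
      |(indepOf M).EOm (fun z y =>
          (if partsConn (omegaParts G₁ G₂ π₁ π₂) z then (1 : ℝ) else 0) *
            (monoE G₁.Ed π₁ (obsIdx M.q y) * monoE G₂.Ed π₂ (obsIdx M.q y)))| ≤
        cd2 * (D : ℝ) ^ cd1 * ((D : ℝ) ^ cd1 * lam) ^ (lEdel G₁ G₂ π₁ π₂).card *
          pbarOf M.q lam ^ (lEcap G₁ G₂ π₁ π₂).card *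
          ((D : ℝ) ^ cd1 * k / n) ^
            ((vertsOf (lEdel G₁ G₂ π₁ π₂)).card - ccOf (lEdel G₁ G₂ π₁ π₂)) *
          (cd2 * (D : ℝ) ^ cd1 / Real.sqrt n) ^ ccPure G₁ G₂ π₁ π₂

/-! ### Edit distance -/

/-- `|E_Δ|` attached to a matching, counted without labels. -/
def EdelCard (G₁ G₂ : Graf) (Mm : Finset (Fin G₁.m × Fin G₂.m)) : ℕ :=
  (G₁.Ed.filter (fun e => ¬ matched1 G₁ G₂ Mm e)).card +
  (G₂.Ed.filter (fun e => ¬ matched2 G₁ G₂ Mm e)).card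

/-- The edit distance `d(G₁, G₂) = min_{M ∈ 𝓜} |E_Δ|`. -/
def editDist (G₁ G₂ : Graf) : ℕ :=
  sInf {c : ℕ | ∃ Mm : Finset (Fin G₁.m × Fin G₂.m), IsMatching Mm ∧ c = EdelCard G₁ G₂ Mm}

/-! ### Permutation action and invariance -/

/-- Action of a permutation of the nodes on an index pair. -/
def permIdx {n : ℕ} (σ : Equiv.Perm (Fin n)) (p : Idx n) : Idx n :=
  ⟨(min (σ p.1.1) (σ p.1.2), max (σ p.1.1) (σ p.1.2)),
    min_lt_max.mpr (fun h => p.2.ne (σ.injective h))⟩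

/-- `(Y_σ)_{ij} = Y_{σ(i) σ(j)}`. -/
def permuteObs {n : ℕ} (σ : Equiv.Perm (Fin n)) (Y : Obs n) : Obs n :=
  fun p => Y (permIdx σ p)

/-- The symmetrized polynomial `f_inv`. -/
def finv {n : ℕ} (f : MvPolynomial (Idx n) ℝ) (Y : Obs n) : ℝ :=
  ((n.factorial : ℝ))⁻¹ * ∑ σ : Equiv.Perm (Fin n), evalPoly f (permuteObs σ Y)

/-- Low-degree advantage for testing two measures. -/
def AdvM {n : ℕ} (μ ν : Measure (Obs n)) (D : ℕ) : ℝ :=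
  sSup {r : ℝ | ∃ f : MvPolynomial (Idx n) ℝ, f.totalDegree ≤ D ∧
    0 < ∫ Y, (evalPoly f Y) ^ 2 ∂μ ∧
    r = (∫ Y, evalPoly f Y ∂ν) / Real.sqrt (∫ Y, (evalPoly f Y) ^ 2 ∂μ)}

/-- The invariant polynomial `P_G`. -/
def PG {n : ℕ} (G : Graf) (Y : Obs n) : ℝ :=
  ∑ π ∈ injs G.m n, monoE G.Ed π Y

/-- The hidden-subclique model (HS-I) with `q = 1/2`. -/
def modelHSI (n k : ℕ) (lam : ℝ) : Model n := ⟨1 / 2, thetaHS n k lam, wIndep n⟩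

/-- The signal condition `(λk/√(q̄ n)) ∨ (λ/√q̄) ∨ (k/n) ≤ D^{-8c₀}` with `q̄ = 1/4`. -/
def signalHS (n k D : ℕ) (lam c0 : ℝ) : Prop :=
  max (max (lam * k / Real.sqrt ((1 / 4 : ℝ) * n)) (lam / Real.sqrt (1 / 4 : ℝ)))
      ((k : ℝ) / n)
    ≤ (D : ℝ) ^ (-(8 * c0))

/-! ### Auxiliary lemmas for Statement 11 -/

section Aux

/-- The ordered representative of an unordered pair. -/
def orep {m : ℕ} : Sym2 (Fin m) → Fin m × Fin m :=
  Sym2.lift ⟨fun i j => (min i j, max i j), fun i j => by simp [min_comm, max_comm]⟩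

@[simp] lemma orep_mk {m : ℕ} (a b : Fin m) : orep s(a, b) = (min a b, max a b) := rfl

lemma mk_orep {m : ℕ} (f : Sym2 (Fin m)) : s((orep f).1, (orep f).2) = f := by
  induction f using Sym2.ind with
  | _ a b =>
    rcases le_total a b with h | h
    · simp [min_eq_left h, max_eq_right h]
    · simp only [orep_mk, min_eq_right h, max_eq_left h]
      exact Sym2.eq_swap

lemma orep_injective {m : ℕ} : Function.Injective (orep (m := m)) := by
  intro f g h
  rw [← mk_orep f, ← mk_orep g, h]

lemma orep_lt {m : ℕ} {f : Sym2 (Fin m)} (hf : ¬ f.IsDiag) : (orep f).1 < (orep f).2 := by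
  induction f using Sym2.ind with
  | _ a b =>
    rw [Sym2.mk_isDiag_iff] at hf
    simpa using min_lt_max.mpr hf

lemma orep_fst_mem {m : ℕ} (f : Sym2 (Fin m)) : (orep f).1 ∈ f := by
  induction f using Sym2.ind with
  | _ a b =>
    rw [orep_mk]
    rcases le_total a b with h | h
    · simp [min_eq_left h]
    · simp [min_eq_right h]

lemma orep_snd_mem {m : ℕ} (f : Sym2 (Fin m)) : (orep f).2 ∈ f := by
  induction f using Sym2.ind with
  | _ a b =>
    rw [orep_mk]
    rcases le_total a b with h | h
    · simp [max_eq_right h]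
    · simp [max_eq_left h]

lemma edgeValSym_eq {n : ℕ} (Y : Obs n) {f : Sym2 (Fin n)} (hf : ¬ f.IsDiag) :
    edgeValSym Y f = Y ⟨orep f, orep_lt hf⟩ := by
  induction f using Sym2.ind with
  | _ a b =>
    rw [Sym2.mk_isDiag_iff] at hf
    show edgeVal Y a b = _
    rw [edgeVal, dif_neg hf]
    rfl

lemma edgeValSym_obsIdx {n : ℕ} (q : ℝ) (y : Fin n → Fin n → Bool) {f : Sym2 (Fin n)}
    (hf : ¬ f.IsDiag) :
    edgeValSym (obsIdx q y) f = (if y (orep f).1 (orep f).2 then (1:ℝ) else 0) - q := by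
  rw [edgeValSym_eq _ hf]; rfl

lemma edgeValSym_obsIdx_sq {n : ℕ} (y : Fin n → Fin n → Bool) {f : Sym2 (Fin n)}
    (hf : ¬ f.IsDiag) :
    (edgeValSym (obsIdx (1/2) y) f) ^ 2 = 1/4 := by
  rw [edgeValSym_obsIdx _ _ hf]
  by_cases h : y (orep f).1 (orep f).2 <;> simp [h] <;> norm_num

lemma isDiag_map_iff {α β : Type*} {g : α → β} (hg : Function.Injective g) (e : Sym2 α) :
    (e.map g).IsDiag ↔ e.IsDiag := by
  induction e using Sym2.ind with
  | _ a b => simp [Sym2.map_pair_eq, Sym2.mk_isDiag_iff, hg.eq_iff]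

lemma E_congr_obs {n : ℕ} {M : Model n} {f g : Obs n → ℝ}
    (h : ∀ y, f (obsIdx M.q y) = g (obsIdx M.q y)) : M.E f = M.E g := by
  unfold Model.E Model.EOm
  exact Finset.sum_congr rfl fun z _ => Finset.sum_congr rfl fun y _ => by
    dsimp only; rw [h]

lemma E_mul_const {n : ℕ} (M : Model n) (c : ℝ) (f : Obs n → ℝ) :
    M.E (fun Y => c * f Y) = c * M.E f := by
  unfold Model.E Model.EOm
  rw [Finset.mul_sum]
  refine Finset.sum_congr rfl fun z _ => ?_
  rw [Finset.mul_sum]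
  exact Finset.sum_congr rfl fun y _ => by ring

/-- Integrating out the observations: the expectation of a product of distinct edges given `z`. -/
lemma sum_y_eq {n : ℕ} (q : ℝ) (A : Fin n → Fin n → ℝ)
    (B : Finset (Sym2 (Fin n))) (hB : ∀ e ∈ B, ¬ e.IsDiag) (hq : q = 1/2) :
    ∑ y : Fin n → Fin n → Bool,
        wObsA q A y * ∏ f ∈ B, edgeValSym (obsIdx q y) f
      = ∏ f ∈ B, A (orep f).1 (orep f).2 := by
  classical
  set P : Finset (Fin n × Fin n) := B.image orep with hP
  have hPlt : ∀ p ∈ P, p.1 < p.2 := by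
    intro p hp
    obtain ⟨f, hf, rfl⟩ := Finset.mem_image.mp hp
    exact orep_lt (hB f hf)
  have key : ∀ y : Fin n → Fin n → Bool,
      wObsA q A y * ∏ f ∈ B, edgeValSym (obsIdx q y) f
        = ∏ p : Fin n × Fin n,
            ((if p.1 < p.2 then bern (q + A p.1 p.2) (y p.1 p.2) else (1/2:ℝ)) *
             (if p ∈ P then ((if y p.1 p.2 then (1:ℝ) else 0) - q) else 1)) := by
    intro y
    rw [Finset.prod_mul_distrib]
    congr 1
    · rw [wObsA, ← Fintype.prod_prod_type']
    · rw [Finset.prod_ite_mem, Finset.univ_inter, hP,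
        Finset.prod_image (fun a _ b _ h => orep_injective h)]
      exact Finset.prod_congr rfl fun f hf => edgeValSym_obsIdx q y (hB f hf)
  calc ∑ y : Fin n → Fin n → Bool, wObsA q A y * ∏ f ∈ B, edgeValSym (obsIdx q y) f
      = ∑ y : Fin n → Fin n → Bool, ∏ p : Fin n × Fin n,
          ((if p.1 < p.2 then bern (q + A p.1 p.2) (y p.1 p.2) else (1/2:ℝ)) *
           (if p ∈ P then ((if y p.1 p.2 then (1:ℝ) else 0) - q) else 1)) :=
        Finset.sum_congr rfl fun y _ => key y
    _ = ∑ y' : Fin n × Fin n → Bool, ∏ p : Fin n × Fin n,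
          ((if p.1 < p.2 then bern (q + A p.1 p.2) (y' p) else (1/2:ℝ)) *
           (if p ∈ P then ((if y' p then (1:ℝ) else 0) - q) else 1)) := by
        rw [← Equiv.sum_comp (Equiv.curry (Fin n) (Fin n) Bool)]
        exact Finset.sum_congr rfl fun y' _ => Finset.prod_congr rfl fun p _ => rfl
    _ = ∏ p : Fin n × Fin n, ∑ b : Bool,
          ((if p.1 < p.2 then bern (q + A p.1 p.2) b else (1/2:ℝ)) *
           (if p ∈ P then ((if b then (1:ℝ) else 0) - q) else 1)) := by
        rw [← Finset.sum_prod_piFinset Finset.univ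
          (fun p b => ((if p.1 < p.2 then bern (q + A p.1 p.2) b else (1/2:ℝ)) *
           (if p ∈ P then ((if b then (1:ℝ) else 0) - q) else 1)))]
        rw [Fintype.piFinset_univ]
    _ = ∏ p : Fin n × Fin n, (if p ∈ P then A p.1 p.2 else 1) := by
        refine Finset.prod_congr rfl fun p _ => ?_
        by_cases hp : p ∈ P
        · have hlt := hPlt p hp
          simp only [hp, if_pos, hlt, if_true, Fintype.sum_bool, bern]
          norm_num [hq]; ring
        · by_cases hlt : p.1 < p.2 <;>
            simp [hp, hlt, bern, Fintype.sum_bool] <;> ring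
    _ = ∏ p ∈ P, A p.1 p.2 := by rw [Finset.prod_ite_mem, Finset.univ_inter]
    _ = ∏ f ∈ B, A (orep f).1 (orep f).2 := by
        rw [hP, Finset.prod_image (fun a _ b _ h => orep_injective h)]

end Aux
section Aux2

lemma card_filter_val_lt (n k : ℕ) (hkn : k ≤ n) :
    (Finset.univ.filter (fun t : Fin n => (t : ℕ) < k)).card = k := by
  have : Finset.univ.filter (fun t : Fin n => (t : ℕ) < k)
      = (Finset.univ : Finset (Fin k)).map (Fin.castLEEmb hkn) := by
    ext t
    rw [Finset.mem_filter, Finset.mem_map]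
    constructor
    · rintro ⟨-, h⟩
      exact ⟨⟨(t : ℕ), h⟩, Finset.mem_univ _, Fin.ext rfl⟩
    · rintro ⟨s, -, rfl⟩
      exact ⟨Finset.mem_univ _, by simpa using s.2⟩
  rw [this, Finset.card_map, Finset.card_univ, Fintype.card_fin]

/-- The key closed-form expectation: a product of distinct non-diagonal labeled edges. -/
lemma E_prod_edges (n k : ℕ) (lam : ℝ) (hn : 0 < n) (hkn : k ≤ n)
    (B : Finset (Sym2 (Fin n))) (hB : ∀ e ∈ B, ¬ e.IsDiag) :
    (modelHSI n k lam).E (fun Y => ∏ f ∈ B, edgeValSym Y f)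
      = lam ^ B.card * ((k : ℝ) / n) ^ (vertsOf B).card := by
  classical
  unfold Model.E Model.EOm modelHSI
  dsimp only
  have step1 : ∀ z : Fin n → Fin n,
      ∑ y : Fin n → Fin n → Bool,
        wIndep n z * wObs (1/2) (thetaHS n k lam) z y * ∏ f ∈ B, edgeValSym (obsIdx (1/2) y) f
      = wIndep n z * ∏ f ∈ B, thetaHS n k lam (z (orep f).1) (z (orep f).2) := by
    intro z
    rw [← sum_y_eq (1/2) (fun i j => thetaHS n k lam (z i) (z j)) B hB rfl, Finset.mul_sum]
    exact Finset.sum_congr rfl fun y _ => by rw [wObs]; ring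
  rw [Finset.sum_congr rfl fun z _ => step1 z]
  have step2 : ∀ z : Fin n → Fin n,
      ∏ f ∈ B, thetaHS n k lam (z (orep f).1) (z (orep f).2)
        = lam ^ B.card * ∏ v ∈ vertsOf B, (if ((z v) : ℕ) < k then (1:ℝ) else 0) := by
    intro z
    have h1 : ∀ f ∈ B, thetaHS n k lam (z (orep f).1) (z (orep f).2)
        = lam * (if (((z (orep f).1) : ℕ) < k ∧ ((z (orep f).2) : ℕ) < k) then (1:ℝ) else 0) := by
      intro f _
      rw [thetaHS]
      by_cases h : ((z (orep f).1 : ℕ) < k ∧ ((z (orep f).2) : ℕ) < k) <;> simp [h]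
    rw [Finset.prod_congr rfl h1, Finset.prod_mul_distrib, Finset.prod_const,
      Finset.prod_boole, Finset.prod_boole]
    congr 1
    by_cases hall : ∀ v ∈ vertsOf B, ((z v : ℕ) < k)
    · rw [if_pos hall, if_pos]
      intro f hf
      constructor
      · exact hall _ (Finset.mem_filter.mpr ⟨Finset.mem_univ _, f, hf, orep_fst_mem f⟩)
      · exact hall _ (Finset.mem_filter.mpr ⟨Finset.mem_univ _, f, hf, orep_snd_mem f⟩)
    · rw [if_neg hall, if_neg]
      intro hcond
      apply hall
      intro v hv
      obtain ⟨-, f, hf, hvf⟩ := Finset.mem_filter.mp hv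
      have := hcond f hf
      have hv2 : v = (orep f).1 ∨ v = (orep f).2 := by
        exact Sym2.mem_iff.mp (show v ∈ s((orep f).1, (orep f).2) by rw [mk_orep]; exact hvf)
      rcases hv2 with rfl | rfl
      · exact this.1
      · exact this.2
  rw [Finset.sum_congr rfl fun z _ => by rw [step2 z]]
  have step3 : ∑ z : Fin n → Fin n,
      wIndep n z * (lam ^ B.card * ∏ v ∈ vertsOf B, (if ((z v) : ℕ) < k then (1:ℝ) else 0))
      = lam ^ B.card * (((n:ℝ) ^ n)⁻¹ *
          ∑ z : Fin n → Fin n, ∏ v ∈ vertsOf B, (if ((z v) : ℕ) < k then (1:ℝ) else 0)) := by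
    rw [Finset.mul_sum, Finset.mul_sum]
    exact Finset.sum_congr rfl fun z _ => by rw [wIndep]; ring
  rw [step3]
  have step4 : ∑ z : Fin n → Fin n, ∏ v ∈ vertsOf B, (if ((z v) : ℕ) < k then (1:ℝ) else 0)
      = ∏ v : Fin n, (if v ∈ vertsOf B then (k:ℝ) else (n:ℝ)) := by
    have h0 : ∀ z : Fin n → Fin n,
        ∏ v ∈ vertsOf B, (if ((z v) : ℕ) < k then (1:ℝ) else 0)
        = ∏ v : Fin n, (if v ∈ vertsOf B then (if ((z v) : ℕ) < k then (1:ℝ) else 0) else 1) := by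
      intro z
      rw [Finset.prod_ite_mem, Finset.univ_inter]
    have hs : (∑ z : Fin n → Fin n, ∏ v : Fin n,
          (if v ∈ vertsOf B then (if ((z v) : ℕ) < k then (1:ℝ) else 0) else 1))
        = ∏ v : Fin n, ∑ t : Fin n,
            (if v ∈ vertsOf B then (if (t : ℕ) < k then (1:ℝ) else 0) else 1) := by
      rw [← Finset.sum_prod_piFinset Finset.univ
        (fun v (t : Fin n) => (if v ∈ vertsOf B then (if (t : ℕ) < k then (1:ℝ) else 0) else 1)),
        Fintype.piFinset_univ]
    rw [Finset.sum_congr rfl fun z _ => h0 z, hs]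
    refine Finset.prod_congr rfl fun v _ => ?_
    by_cases hv : v ∈ vertsOf B
    · simp only [hv, if_true]
      rw [Finset.sum_boole, card_filter_val_lt n k hkn]
    · simp [hv, Finset.card_univ]
  rw [step4]
  have hnR : (0:ℝ) < n := by exact_mod_cast hn
  have step5 : ((n:ℝ) ^ n)⁻¹ * ∏ v : Fin n, (if v ∈ vertsOf B then (k:ℝ) else (n:ℝ))
      = ((k:ℝ)/n) ^ (vertsOf B).card := by
    have h1 : ((n:ℝ) ^ n)⁻¹ = ∏ _v : Fin n, (n:ℝ)⁻¹ := by
      rw [Finset.prod_const, Finset.card_univ, Fintype.card_fin, inv_pow]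
    rw [h1, ← Finset.prod_mul_distrib]
    have h2 : ∀ v : Fin n, (n:ℝ)⁻¹ * (if v ∈ vertsOf B then (k:ℝ) else (n:ℝ))
        = (if v ∈ vertsOf B then ((k:ℝ)/n) else 1) := by
      intro v
      by_cases hv : v ∈ vertsOf B
      · simp [hv]; ring
      · simp [hv]
        exact inv_mul_cancel₀ (ne_of_gt hnR)
    rw [Finset.prod_congr rfl fun v _ => h2 v, Finset.prod_ite_mem, Finset.univ_inter,
      Finset.prod_const]
  rw [step5]

lemma E_prod_sq_edges (n k : ℕ) (lam : ℝ) (hn : 0 < n) (hkn : k ≤ n)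
    (Acap B : Finset (Sym2 (Fin n))) (hA : ∀ e ∈ Acap, ¬ e.IsDiag)
    (hB : ∀ e ∈ B, ¬ e.IsDiag) :
    (modelHSI n k lam).E
        (fun Y => (∏ f ∈ Acap, (edgeValSym Y f)^2) * ∏ f ∈ B, edgeValSym Y f)
      = (1/4 : ℝ) ^ Acap.card * (lam ^ B.card * ((k : ℝ) / n) ^ (vertsOf B).card) := by
  have h1 : (modelHSI n k lam).E
      (fun Y => (∏ f ∈ Acap, (edgeValSym Y f)^2) * ∏ f ∈ B, edgeValSym Y f)
      = (modelHSI n k lam).E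
      (fun Y => (1/4:ℝ) ^ Acap.card * ∏ f ∈ B, edgeValSym Y f) := by
    apply E_congr_obs
    intro y
    congr 1
    have hq : (modelHSI n k lam).q = 1/2 := rfl
    rw [hq]
    rw [← Finset.prod_const]
    exact Finset.prod_congr rfl fun f hf => edgeValSym_obsIdx_sq y (hA f hf)
  rw [h1, E_mul_const, E_prod_edges n k lam hn hkn B hB]

lemma prod_mul_prod_split {β : Type*} [DecidableEq β] (F₁ F₂ : Finset β) (g : β → ℝ) :
    (∏ f ∈ F₁, g f) * (∏ f ∈ F₂, g f)
      = (∏ f ∈ F₁ ∩ F₂, (g f)^2) * ∏ f ∈ (F₁ ∪ F₂) \ (F₁ ∩ F₂), g f := by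
  have h1 := Finset.prod_inter_mul_prod_diff F₁ F₂ g
  have h2 := Finset.prod_inter_mul_prod_diff F₂ F₁ g
  have hdel : (F₁ ∪ F₂) \ (F₁ ∩ F₂) = (F₁ \ F₂) ∪ (F₂ \ F₁) := by
    ext x; simp only [Finset.mem_sdiff, Finset.mem_union, Finset.mem_inter]; tauto
  have hdisj : Disjoint (F₁ \ F₂) (F₂ \ F₁) := by
    rw [Finset.disjoint_left]
    intro a ha hb
    simp only [Finset.mem_sdiff] at ha hb
    exact hb.2 ha.1
  rw [← h1, ← h2, hdel, Finset.prod_union hdisj, Finset.inter_comm F₂ F₁,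
    Finset.prod_pow]
  ring

end Aux2
section Aux3

lemma compOf_congr (G : Graf) {v w : Fin G.m} (h : G.graph.Reachable v w) :
    G.compOf v = G.compOf w := by
  unfold Graf.compOf
  refine Finset.filter_congr fun e _ => ?_
  constructor
  · intro h' x hx; exact h.symm.trans (h' x hx)
  · intro h' x hx; exact h.trans (h' x hx)

lemma mem_compOf (G : Graf) {e : Sym2 (Fin G.m)} (he : e ∈ G.Ed) {v : Fin G.m} (hv : v ∈ e) :
    e ∈ G.compOf v := by
  rw [Graf.compOf, Finset.mem_filter]
  refine ⟨he, fun w hw => ?_⟩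
  by_cases hvw : v = w
  · subst hvw; exact SimpleGraph.Reachable.refl v
  · have hedge : e = s(v, w) := (Sym2.mem_and_mem_iff hvw).mp ⟨hv, hw⟩
    exact SimpleGraph.Adj.reachable ⟨hvw, by rwa [← hedge]⟩

lemma compOf_edge_mem (G : Graf) {C : Finset (Sym2 (Fin G.m))} (hC : C ∈ G.comps)
    {e : Sym2 (Fin G.m)} (he : e ∈ C) : e ∈ G.Ed := by
  obtain ⟨hC', -⟩ := Finset.mem_filter.mp hC
  obtain ⟨v, -, rfl⟩ := Finset.mem_image.mp hC'
  exact (Finset.mem_filter.mp he).1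

lemma comps_exists_rep (G : Graf) {C : Finset (Sym2 (Fin G.m))} (hC : C ∈ G.comps) :
    ∃ v : Fin G.m, G.compOf v = C := by
  obtain ⟨hC', -⟩ := Finset.mem_filter.mp hC
  obtain ⟨v, -, rfl⟩ := Finset.mem_image.mp hC'
  exact ⟨v, rfl⟩

lemma comps_disjoint (G : Graf) {C C' : Finset (Sym2 (Fin G.m))}
    (hC : C ∈ G.comps) (hC' : C' ∈ G.comps) (hne : C ≠ C') : Disjoint C C' := by
  obtain ⟨v, rfl⟩ := comps_exists_rep G hC
  obtain ⟨w, rfl⟩ := comps_exists_rep G hC'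
  rw [Finset.disjoint_left]
  intro e he he'
  obtain ⟨-, h1⟩ := Finset.mem_filter.mp he
  obtain ⟨-, h2⟩ := Finset.mem_filter.mp he'
  have ha := h1 e.out.1 (Sym2.out_fst_mem e)
  have hb := h2 e.out.1 (Sym2.out_fst_mem e)
  exact hne (compOf_congr G (ha.trans hb.symm))

lemma compOf_mem_comps (G : Graf) (v : Fin G.m) (hne : (G.compOf v).Nonempty) :
    G.compOf v ∈ G.comps :=
  Finset.mem_filter.mpr ⟨Finset.mem_image_of_mem _ (Finset.mem_univ v), hne⟩

lemma biUnion_comps (G : Graf) : G.comps.biUnion id = G.Ed := by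
  ext e
  simp only [Finset.mem_biUnion, id]
  constructor
  · rintro ⟨C, hC, heC⟩
    exact compOf_edge_mem G hC heC
  · intro he
    have hmem : e ∈ G.compOf e.out.1 := mem_compOf G he (Sym2.out_fst_mem e)
    exact ⟨G.compOf e.out.1, compOf_mem_comps G _ ⟨e, hmem⟩, hmem⟩

lemma biUnion_subset_Ed (G : Graf) {A : Finset (Finset (Sym2 (Fin G.m)))}
    (hA : A ⊆ G.comps) : A.biUnion id ⊆ G.Ed := by
  intro e he
  obtain ⟨C, hC, heC⟩ := Finset.mem_biUnion.mp he
  exact compOf_edge_mem G (hA hC) heC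

lemma prod_comps_eq {n : ℕ} (G : Graf) (π : Fin G.m → Fin n) (hπ : Function.Injective π)
    (A : Finset (Finset (Sym2 (Fin G.m)))) (hA : A ⊆ G.comps) (Y : Obs n) :
    ∏ C ∈ A, monoE C π Y = ∏ f ∈ (A.biUnion id).image (Sym2.map π), edgeValSym Y f := by
  rw [Finset.prod_image (fun a _ b _ h => Sym2.map.injective hπ h)]
  rw [Finset.prod_biUnion]
  · rfl
  · intro C hC C' hC' hne
    exact comps_disjoint G (hA hC) (hA hC') hne

lemma nondiag_image {n : ℕ} (G : Graf) (π : Fin G.m → Fin n) (hπ : Function.Injective π)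
    {A : Finset (Sym2 (Fin G.m))} (hA : A ⊆ G.Ed) :
    ∀ f ∈ A.image (Sym2.map π), ¬ f.IsDiag := by
  intro f hf
  obtain ⟨e, he, rfl⟩ := Finset.mem_image.mp hf
  rw [isDiag_map_iff hπ]
  exact G.not_diag e (hA he)

/-- Membership of a labeled vertex coming from an incident edge. -/
lemma mem_vertsOf_image {n : ℕ} {mG : ℕ} (π : Fin mG → Fin n)
    {A : Finset (Sym2 (Fin mG))} {e : Sym2 (Fin mG)} (he : e ∈ A)
    {v : Fin mG} (hv : v ∈ e) : π v ∈ vertsOf (A.image (Sym2.map π)) := by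
  refine Finset.mem_filter.mpr ⟨Finset.mem_univ _, Sym2.map π e, Finset.mem_image_of_mem _ he, ?_⟩
  exact Sym2.mem_map.mpr ⟨v, hv, rfl⟩

lemma biUnion_union_eq {α β : Type*} [DecidableEq α] [DecidableEq β]
    (s t : Finset α) (f : α → Finset β) :
    (s ∪ t).biUnion f = s.biUnion f ∪ t.biUnion f := by
  ext x
  simp only [Finset.mem_biUnion, Finset.mem_union]
  constructor
  · rintro ⟨a, (ha | ha), hx⟩
    · exact Or.inl ⟨a, ha, hx⟩
    · exact Or.inr ⟨a, ha, hx⟩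
  · rintro (⟨a, ha, hx⟩ | ⟨a, ha, hx⟩)
    · exact ⟨a, Or.inl ha, hx⟩
    · exact ⟨a, Or.inr ha, hx⟩

end Aux3
/-- component-split moment bounds in (HS-I) with `q = 1/2`. -/
theorem component_split_bound_HSI :
    ∃ c0 : ℝ, 4 ≤ c0 ∧
      ∀ (n D k : ℕ) (lam : ℝ),
        2 ≤ n → 2 ≤ D → 1 ≤ k → k ≤ n → 0 ≤ lam → lam ≤ 1 / 2 →
        signalHS n k D lam c0 →
        ∀ (G₁ G₂ : Graf), G₁.IsTemplate → G₂.IsTemplate →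
          G₁.Ed.card ≤ D → G₂.Ed.card ≤ D →
        ∀ Mm : Finset (Fin G₁.m × Fin G₂.m), IsMatching Mm → InMstar G₁ G₂ Mm →
        ∀ (π₁ : Fin G₁.m → Fin n) (π₂ : Fin G₂.m → Fin n), InPi G₁ G₂ Mm π₁ π₂ →
        ∀ (S₁ : Finset (Finset (Sym2 (Fin G₁.m)))) (S₂ : Finset (Finset (Sym2 (Fin G₂.m)))),
          S₁ ⊆ G₁.comps → S₂ ⊆ G₂.comps →
          0 ≤ (modelHSI n k lam).E
                (fun Y => (∏ C ∈ G₁.comps \ S₁, monoE C π₁ Y) *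
                          (∏ C ∈ G₂.comps \ S₂, monoE C π₂ Y)) *
              (modelHSI n k lam).E (fun Y => ∏ C ∈ S₁, monoE C π₁ Y) *
              (modelHSI n k lam).E (fun Y => ∏ C ∈ S₂, monoE C π₂ Y) ∧
          (modelHSI n k lam).E
                (fun Y => (∏ C ∈ G₁.comps \ S₁, monoE C π₁ Y) *
                          (∏ C ∈ G₂.comps \ S₂, monoE C π₂ Y)) *
              (modelHSI n k lam).E (fun Y => ∏ C ∈ S₁, monoE C π₁ Y) *
              (modelHSI n k lam).E (fun Y => ∏ C ∈ S₂, monoE C π₂ Y) ≤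
            ((k : ℝ) / n) ^ (((S₁.card + S₂.card : ℕ) : ℝ) / 2) *
              (modelHSI n k lam).E (fun Y => monoE G₁.Ed π₁ Y * monoE G₂.Ed π₂ Y) := by
  classical
  refine ⟨4, le_refl 4, ?_⟩
  intro n D k lam hn hD hk hkn hlam0 hlam2 _hsig G₁ G₂ hT₁ hT₂ _hE₁ _hE₂ Mm _hM hMstar
    π₁ π₂ hPi S₁ S₂ hS₁ hS₂
  obtain ⟨hπ₁, hπ₂, hmatch⟩ := hPi
  have hn0 : 0 < n := by omega
  set r : ℝ := (k : ℝ) / n with hrdef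
  have hr0 : (0:ℝ) < r := div_pos (by exact_mod_cast hk) (by exact_mod_cast hn0)
  have hr1 : r ≤ 1 := by
    rw [hrdef, div_le_one (by exact_mod_cast hn0)]
    exact_mod_cast hkn
  set R₁ := G₁.comps \ S₁ with hR₁
  set R₂ := G₂.comps \ S₂ with hR₂
  have hR₁sub : R₁ ⊆ G₁.comps := by rw [hR₁]; exact Finset.sdiff_subset
  have hR₂sub : R₂ ⊆ G₂.comps := by rw [hR₂]; exact Finset.sdiff_subset
  set LR₁ := (R₁.biUnion id).image (Sym2.map π₁) with hLR₁
  set LS₁ := (S₁.biUnion id).image (Sym2.map π₁) with hLS₁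
  set LR₂ := (R₂.biUnion id).image (Sym2.map π₂) with hLR₂
  set LS₂ := (S₂.biUnion id).image (Sym2.map π₂) with hLS₂
  set L₁ := G₁.Ed.image (Sym2.map π₁) with hL₁def
  set L₂ := G₂.Ed.image (Sym2.map π₂) with hL₂def
  set capR := LR₁ ∩ LR₂ with hcapR
  set delR := (LR₁ ∪ LR₂) \ capR with hdelR
  set Cap := L₁ ∩ L₂ with hCap
  set Del := (L₁ ∪ L₂) \ Cap with hDel
  -- non-diagonality facts
  have hnd_LR₁ : ∀ f ∈ LR₁, ¬ f.IsDiag := by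
    rw [hLR₁]; exact nondiag_image G₁ π₁ hπ₁ (biUnion_subset_Ed G₁ hR₁sub)
  have hnd_LS₁ : ∀ f ∈ LS₁, ¬ f.IsDiag := by
    rw [hLS₁]; exact nondiag_image G₁ π₁ hπ₁ (biUnion_subset_Ed G₁ hS₁)
  have hnd_LR₂ : ∀ f ∈ LR₂, ¬ f.IsDiag := by
    rw [hLR₂]; exact nondiag_image G₂ π₂ hπ₂ (biUnion_subset_Ed G₂ hR₂sub)
  have hnd_LS₂ : ∀ f ∈ LS₂, ¬ f.IsDiag := by
    rw [hLS₂]; exact nondiag_image G₂ π₂ hπ₂ (biUnion_subset_Ed G₂ hS₂)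
  have hnd_L₁ : ∀ f ∈ L₁, ¬ f.IsDiag := by
    rw [hL₁def]; exact nondiag_image G₁ π₁ hπ₁ (le_refl _)
  have hnd_L₂ : ∀ f ∈ L₂, ¬ f.IsDiag := by
    rw [hL₂def]; exact nondiag_image G₂ π₂ hπ₂ (le_refl _)
  have hnd_capR : ∀ f ∈ capR, ¬ f.IsDiag := fun f hf =>
    hnd_LR₁ f (Finset.mem_of_mem_inter_left hf)
  have hnd_delR : ∀ f ∈ delR, ¬ f.IsDiag := by
    intro f hf
    rcases Finset.mem_union.mp (Finset.mem_sdiff.mp hf).1 with h | h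
    exacts [hnd_LR₁ f h, hnd_LR₂ f h]
  have hnd_Cap : ∀ f ∈ Cap, ¬ f.IsDiag := fun f hf =>
    hnd_L₁ f (Finset.mem_of_mem_inter_left hf)
  have hnd_Del : ∀ f ∈ Del, ¬ f.IsDiag := by
    intro f hf
    rcases Finset.mem_union.mp (Finset.mem_sdiff.mp hf).1 with h | h
    exacts [hnd_L₁ f h, hnd_L₂ f h]
  -- closed forms for the four expectations
  have hEA : (modelHSI n k lam).E
      (fun Y => (∏ C ∈ R₁, monoE C π₁ Y) * (∏ C ∈ R₂, monoE C π₂ Y))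
      = (1/4:ℝ) ^ capR.card * (lam ^ delR.card * r ^ (vertsOf delR).card) := by
    have hfun : (fun (Y : Obs n) => (∏ C ∈ R₁, monoE C π₁ Y) * (∏ C ∈ R₂, monoE C π₂ Y))
        = (fun Y => (∏ f ∈ capR, (edgeValSym Y f)^2) * ∏ f ∈ delR, edgeValSym Y f) := by
      funext Y
      rw [prod_comps_eq G₁ π₁ hπ₁ R₁ hR₁sub Y, prod_comps_eq G₂ π₂ hπ₂ R₂ hR₂sub Y,
        prod_mul_prod_split]
    rw [hfun]
    exact E_prod_sq_edges n k lam hn0 hkn capR delR hnd_capR hnd_delR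
  have hEB : (modelHSI n k lam).E (fun Y => ∏ C ∈ S₁, monoE C π₁ Y)
      = lam ^ LS₁.card * r ^ (vertsOf LS₁).card := by
    have hfun : (fun (Y : Obs n) => ∏ C ∈ S₁, monoE C π₁ Y)
        = (fun Y => ∏ f ∈ LS₁, edgeValSym Y f) :=
      funext fun Y => prod_comps_eq G₁ π₁ hπ₁ S₁ hS₁ Y
    rw [hfun]
    exact E_prod_edges n k lam hn0 hkn LS₁ hnd_LS₁
  have hEC : (modelHSI n k lam).E (fun Y => ∏ C ∈ S₂, monoE C π₂ Y)
      = lam ^ LS₂.card * r ^ (vertsOf LS₂).card := by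
    have hfun : (fun (Y : Obs n) => ∏ C ∈ S₂, monoE C π₂ Y)
        = (fun Y => ∏ f ∈ LS₂, edgeValSym Y f) :=
      funext fun Y => prod_comps_eq G₂ π₂ hπ₂ S₂ hS₂ Y
    rw [hfun]
    exact E_prod_edges n k lam hn0 hkn LS₂ hnd_LS₂
  have hEfull : (modelHSI n k lam).E (fun Y => monoE G₁.Ed π₁ Y * monoE G₂.Ed π₂ Y)
      = (1/4:ℝ) ^ Cap.card * (lam ^ Del.card * r ^ (vertsOf Del).card) := by
    have hfun : (fun (Y : Obs n) => monoE G₁.Ed π₁ Y * monoE G₂.Ed π₂ Y)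
        = (fun Y => (∏ f ∈ Cap, (edgeValSym Y f)^2) * ∏ f ∈ Del, edgeValSym Y f) := by
      funext Y
      have h1 : monoE G₁.Ed π₁ Y = ∏ f ∈ L₁, edgeValSym Y f := by
        rw [hL₁def, Finset.prod_image (fun a _ b _ h => Sym2.map.injective hπ₁ h)]
        rfl
      have h2 : monoE G₂.Ed π₂ Y = ∏ f ∈ L₂, edgeValSym Y f := by
        rw [hL₂def, Finset.prod_image (fun a _ b _ h => Sym2.map.injective hπ₂ h)]
        rfl
      rw [h1, h2, prod_mul_prod_split]
    rw [hfun]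
    exact E_prod_sq_edges n k lam hn0 hkn Cap Del hnd_Cap hnd_Del
  -- decomposition facts
  have hcomps₁ : G₁.comps = R₁ ∪ S₁ := by rw [hR₁, Finset.sdiff_union_of_subset hS₁]
  have hcomps₂ : G₂.comps = R₂ ∪ S₂ := by rw [hR₂, Finset.sdiff_union_of_subset hS₂]
  have hL₁split : L₁ = LR₁ ∪ LS₁ := by
    rw [hL₁def, hLR₁, hLS₁, ← Finset.image_union, ← biUnion_union_eq, ← hcomps₁,
      biUnion_comps]
  have hL₂split : L₂ = LR₂ ∪ LS₂ := by
    rw [hL₂def, hLR₂, hLS₂, ← Finset.image_union, ← biUnion_union_eq, ← hcomps₂,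
      biUnion_comps]
  have hbidisj₁ : Disjoint (R₁.biUnion id) (S₁.biUnion id) := by
    rw [Finset.disjoint_left]
    intro e he he'
    obtain ⟨C, hC, heC⟩ := Finset.mem_biUnion.mp he
    obtain ⟨C', hC', heC'⟩ := Finset.mem_biUnion.mp he'
    have hne : C ≠ C' := by
      intro h
      exact (Finset.mem_sdiff.mp (hR₁ ▸ hC)).2 (h ▸ hC')
    exact Finset.disjoint_left.mp (comps_disjoint G₁ (hR₁sub hC) (hS₁ hC') hne) heC heC'
  have hbidisj₂ : Disjoint (R₂.biUnion id) (S₂.biUnion id) := by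
    rw [Finset.disjoint_left]
    intro e he he'
    obtain ⟨C, hC, heC⟩ := Finset.mem_biUnion.mp he
    obtain ⟨C', hC', heC'⟩ := Finset.mem_biUnion.mp he'
    have hne : C ≠ C' := by
      intro h
      exact (Finset.mem_sdiff.mp (hR₂ ▸ hC)).2 (h ▸ hC')
    exact Finset.disjoint_left.mp (comps_disjoint G₂ (hR₂sub hC) (hS₂ hC') hne) heC heC'
  have hdisjL₁ : Disjoint LR₁ LS₁ := by
    rw [hLR₁, hLS₁, Finset.disjoint_image (Sym2.map.injective hπ₁)]
    exact hbidisj₁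
  have hdisjL₂ : Disjoint LR₂ LS₂ := by
    rw [hLR₂, hLS₂, Finset.disjoint_image (Sym2.map.injective hπ₂)]
    exact hbidisj₂
  have hcardL₁ : L₁.card = LR₁.card + LS₁.card := by
    rw [hL₁split, Finset.card_union_of_disjoint hdisjL₁]
  have hcardL₂ : L₂.card = LR₂.card + LS₂.card := by
    rw [hL₂split, Finset.card_union_of_disjoint hdisjL₂]
  have hsubcap : capR ⊆ Cap := by
    rw [hcapR, hCap, hL₁split, hL₂split]
    exact Finset.inter_subset_inter Finset.subset_union_left Finset.subset_union_left
  have hc : capR.card ≤ Cap.card := Finset.card_le_card hsubcap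
  have hedge_id : delR.card + LS₁.card + LS₂.card + 2 * capR.card
      = Del.card + 2 * Cap.card := by
    have e1 : delR.card + capR.card = (LR₁ ∪ LR₂).card := by
      rw [hdelR]; exact Finset.card_sdiff_add_card_eq_card Finset.inter_subset_union
    have e2 : (LR₁ ∪ LR₂).card + capR.card = LR₁.card + LR₂.card :=
      Finset.card_union_add_card_inter LR₁ LR₂
    have e3 : Del.card + Cap.card = (L₁ ∪ L₂).card := by
      rw [hDel]; exact Finset.card_sdiff_add_card_eq_card Finset.inter_subset_union
    have e4 : (L₁ ∪ L₂).card + Cap.card = L₁.card + L₂.card :=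
      Finset.card_union_add_card_inter L₁ L₂
    omega
  -- choice of matched vertices for the components in S₁ and S₂
  have hvertex₁ : ∀ C : Finset (Sym2 (Fin G₁.m)), ∃ u : Fin n,
      C ∈ S₁ → ∃ v : Fin G₁.m, π₁ v = u ∧ G₁.compOf v = C ∧ ∃ p ∈ Mm, p.1 = v := by
    intro C
    by_cases hC : C ∈ S₁
    · have hCc := hS₁ hC
      obtain ⟨v₀, hv₀⟩ := comps_exists_rep G₁ hCc
      have hne : C.Nonempty := (Finset.mem_filter.mp hCc).2
      obtain ⟨e₀, he₀⟩ := hne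
      have he₀' : e₀ ∈ G₁.compOf v₀ := hv₀ ▸ he₀
      have hreach : G₁.graph.Reachable v₀ e₀.out.1 :=
        (Finset.mem_filter.mp he₀').2 _ (Sym2.out_fst_mem e₀)
      obtain ⟨p, hp, hpr⟩ := hMstar.1 e₀.out.1
      refine ⟨π₁ p.1, fun _ => ⟨p.1, rfl, ?_, ⟨p, hp, rfl⟩⟩⟩
      rw [compOf_congr G₁ (hpr.trans hreach.symm), hv₀]
    · exact ⟨⟨0, hn0⟩, fun h => absurd h hC⟩
  have hvertex₂ : ∀ C : Finset (Sym2 (Fin G₂.m)), ∃ u : Fin n,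
      C ∈ S₂ → ∃ v : Fin G₂.m, π₂ v = u ∧ G₂.compOf v = C ∧ ∃ p ∈ Mm, p.2 = v := by
    intro C
    by_cases hC : C ∈ S₂
    · have hCc := hS₂ hC
      obtain ⟨v₀, hv₀⟩ := comps_exists_rep G₂ hCc
      have hne : C.Nonempty := (Finset.mem_filter.mp hCc).2
      obtain ⟨e₀, he₀⟩ := hne
      have he₀' : e₀ ∈ G₂.compOf v₀ := hv₀ ▸ he₀
      have hreach : G₂.graph.Reachable v₀ e₀.out.1 :=
        (Finset.mem_filter.mp he₀').2 _ (Sym2.out_fst_mem e₀)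
      obtain ⟨p, hp, hpr⟩ := hMstar.2 e₀.out.1
      refine ⟨π₂ p.2, fun _ => ⟨p.2, rfl, ?_, ⟨p, hp, rfl⟩⟩⟩
      rw [compOf_congr G₂ (hpr.trans hreach.symm), hv₀]
    · exact ⟨⟨0, hn0⟩, fun h => absurd h hC⟩
  choose φ₁ hφ₁ using hvertex₁
  choose φ₂ hφ₂ using hvertex₂
  have hinj₁ : Set.InjOn φ₁ ↑S₁ := by
    intro C hC C' hC' heq
    obtain ⟨v, hv, hCv, -⟩ := hφ₁ C (Finset.mem_coe.mp hC)
    obtain ⟨v', hv', hCv', -⟩ := hφ₁ C' (Finset.mem_coe.mp hC')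
    have : v = v' := hπ₁ (by rw [hv, hv', heq])
    rw [← hCv, ← hCv', this]
  have hinj₂ : Set.InjOn φ₂ ↑S₂ := by
    intro C hC C' hC' heq
    obtain ⟨v, hv, hCv, -⟩ := hφ₂ C (Finset.mem_coe.mp hC)
    obtain ⟨v', hv', hCv', -⟩ := hφ₂ C' (Finset.mem_coe.mp hC')
    have : v = v' := hπ₂ (by rw [hv, hv', heq])
    rw [← hCv, ← hCv', this]
  -- key membership properties
  have hkey₁ : ∀ C ∈ S₁, φ₁ C ∈ vertsOf LS₁ ∧
      (φ₁ C ∈ vertsOf LS₂ ∨ φ₁ C ∈ vertsOf delR) := by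
    intro C hC
    obtain ⟨v, hvu, hCv, p, hp, hpv⟩ := hφ₁ C hC
    obtain ⟨e, he, hve⟩ := hT₁ v
    have heC : e ∈ C := hCv ▸ mem_compOf G₁ he hve
    have hπeq : π₁ p.1 = π₂ p.2 := (hmatch p.1 p.2).mpr (by simpa using hp)
    have hu2 : φ₁ C = π₂ p.2 := by rw [← hvu, ← hpv] at *; exact hπeq
    constructor
    · rw [← hvu, hLS₁]
      exact mem_vertsOf_image π₁ (Finset.mem_biUnion.mpr ⟨C, hC, heC⟩) hve
    · obtain ⟨e₂, he₂, hpe₂⟩ := hT₂ p.2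
      have he₂C : e₂ ∈ G₂.compOf p.2 := mem_compOf G₂ he₂ hpe₂
      have hC₂mem : G₂.compOf p.2 ∈ G₂.comps := compOf_mem_comps G₂ p.2 ⟨e₂, he₂C⟩
      by_cases hC₂ : G₂.compOf p.2 ∈ S₂
      · left
        rw [hu2, hLS₂]
        exact mem_vertsOf_image π₂ (Finset.mem_biUnion.mpr ⟨_, hC₂, he₂C⟩) hpe₂
      · right
        have hC₂R : G₂.compOf p.2 ∈ R₂ := by
          rw [hR₂]; exact Finset.mem_sdiff.mpr ⟨hC₂mem, hC₂⟩
        have hf₂R₂ : Sym2.map π₂ e₂ ∈ LR₂ := by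
          rw [hLR₂]
          exact Finset.mem_image_of_mem _ (Finset.mem_biUnion.mpr ⟨_, hC₂R, he₂C⟩)
        have hf₂notR₁ : Sym2.map π₂ e₂ ∉ LR₁ := by
          intro hcontra
          rw [hLR₁] at hcontra
          obtain ⟨e₁, he₁, hfe⟩ := Finset.mem_image.mp hcontra
          have hu_in : π₂ p.2 ∈ Sym2.map π₂ e₂ := Sym2.mem_map.mpr ⟨p.2, hpe₂, rfl⟩
          rw [← hfe] at hu_in
          obtain ⟨a, hae, ha⟩ := Sym2.mem_map.mp hu_in
          have hap : a = p.1 := hπ₁ (ha.trans hπeq.symm)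
          obtain ⟨C'', hC''R, he₁C''⟩ := Finset.mem_biUnion.mp he₁
          have hC''c : C'' ∈ G₁.comps := hR₁sub hC''R
          have he₁Ed : e₁ ∈ G₁.Ed := compOf_edge_mem G₁ hC''c he₁C''
          have he₁C : e₁ ∈ C := by
            rw [← hCv]
            exact mem_compOf G₁ he₁Ed (by rw [← hpv, ← hap]; exact hae)
          have hne : C'' ≠ C := by
            intro h
            exact (Finset.mem_sdiff.mp (hR₁ ▸ hC''R)).2 (h ▸ hC)
          exact Finset.disjoint_left.mp (comps_disjoint G₁ hC''c (hS₁ hC) hne) he₁C'' he₁C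
        have hfdel : Sym2.map π₂ e₂ ∈ delR := by
          rw [hdelR]
          refine Finset.mem_sdiff.mpr ⟨Finset.mem_union_right _ hf₂R₂, fun hcap => ?_⟩
          exact hf₂notR₁ (Finset.mem_of_mem_inter_left (hcapR ▸ hcap))
        refine Finset.mem_filter.mpr ⟨Finset.mem_univ _, Sym2.map π₂ e₂, hfdel, ?_⟩
        rw [hu2]
        exact Sym2.mem_map.mpr ⟨p.2, hpe₂, rfl⟩
  have hkey₂ : ∀ C ∈ S₂, φ₂ C ∈ vertsOf LS₂ ∧
      (φ₂ C ∈ vertsOf LS₁ ∨ φ₂ C ∈ vertsOf delR) := by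
    intro C hC
    obtain ⟨v, hvu, hCv, p, hp, hpv⟩ := hφ₂ C hC
    obtain ⟨e, he, hve⟩ := hT₂ v
    have heC : e ∈ C := hCv ▸ mem_compOf G₂ he hve
    have hπeq : π₁ p.1 = π₂ p.2 := (hmatch p.1 p.2).mpr (by simpa using hp)
    have hu2 : φ₂ C = π₁ p.1 := by rw [← hvu, ← hpv] at *; exact hπeq.symm
    constructor
    · rw [← hvu, hLS₂]
      exact mem_vertsOf_image π₂ (Finset.mem_biUnion.mpr ⟨C, hC, heC⟩) hve
    · obtain ⟨e₁, he₁, hpe₁⟩ := hT₁ p.1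
      have he₁C : e₁ ∈ G₁.compOf p.1 := mem_compOf G₁ he₁ hpe₁
      have hC₁mem : G₁.compOf p.1 ∈ G₁.comps := compOf_mem_comps G₁ p.1 ⟨e₁, he₁C⟩
      by_cases hC₁ : G₁.compOf p.1 ∈ S₁
      · left
        rw [hu2, hLS₁]
        exact mem_vertsOf_image π₁ (Finset.mem_biUnion.mpr ⟨_, hC₁, he₁C⟩) hpe₁
      · right
        have hC₁R : G₁.compOf p.1 ∈ R₁ := by
          rw [hR₁]; exact Finset.mem_sdiff.mpr ⟨hC₁mem, hC₁⟩
        have hf₁R₁ : Sym2.map π₁ e₁ ∈ LR₁ := by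
          rw [hLR₁]
          exact Finset.mem_image_of_mem _ (Finset.mem_biUnion.mpr ⟨_, hC₁R, he₁C⟩)
        have hf₁notR₂ : Sym2.map π₁ e₁ ∉ LR₂ := by
          intro hcontra
          rw [hLR₂] at hcontra
          obtain ⟨e₂, he₂, hfe⟩ := Finset.mem_image.mp hcontra
          have hu_in : π₁ p.1 ∈ Sym2.map π₁ e₁ := Sym2.mem_map.mpr ⟨p.1, hpe₁, rfl⟩
          rw [← hfe] at hu_in
          obtain ⟨a, hae, ha⟩ := Sym2.mem_map.mp hu_in
          have hap : a = p.2 := hπ₂ (ha.trans hπeq)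
          obtain ⟨C'', hC''R, he₂C''⟩ := Finset.mem_biUnion.mp he₂
          have hC''c : C'' ∈ G₂.comps := hR₂sub hC''R
          have he₂Ed : e₂ ∈ G₂.Ed := compOf_edge_mem G₂ hC''c he₂C''
          have he₂C : e₂ ∈ C := by
            rw [← hCv]
            exact mem_compOf G₂ he₂Ed (by rw [← hpv, ← hap]; exact hae)
          have hne : C'' ≠ C := by
            intro h
            exact (Finset.mem_sdiff.mp (hR₂ ▸ hC''R)).2 (h ▸ hC)
          exact Finset.disjoint_left.mp (comps_disjoint G₂ hC''c (hS₂ hC) hne) he₂C'' he₂C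
        have hfdel : Sym2.map π₁ e₁ ∈ delR := by
          rw [hdelR]
          refine Finset.mem_sdiff.mpr ⟨Finset.mem_union_left _ hf₁R₁, fun hcap => ?_⟩
          exact hf₁notR₂ ((Finset.mem_inter.mp (hcapR ▸ hcap)).2)
        refine Finset.mem_filter.mpr ⟨Finset.mem_univ _, Sym2.map π₁ e₁, hfdel, ?_⟩
        rw [hu2]
        exact Sym2.mem_map.mpr ⟨p.1, hpe₁, rfl⟩
  have hK1 : ∀ u : Fin n, u ∈ vertsOf Del →
      (u ∈ vertsOf delR ∨ u ∈ vertsOf LS₁ ∨ u ∈ vertsOf LS₂) := by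
    intro u hu
    obtain ⟨-, f, hf, huf⟩ := Finset.mem_filter.mp hu
    obtain ⟨hfu, hfcap⟩ := Finset.mem_sdiff.mp (hDel ▸ hf)
    have hvd : ∀ F, f ∈ F → u ∈ vertsOf F := fun F hF =>
      Finset.mem_filter.mpr ⟨Finset.mem_univ _, f, hF, huf⟩
    rcases Finset.mem_union.mp hfu with h1 | h2
    · rcases Finset.mem_union.mp (hL₁split ▸ h1) with hR | hS
      · left
        apply hvd
        rw [hdelR]
        refine Finset.mem_sdiff.mpr ⟨Finset.mem_union_left _ hR, fun hcap => ?_⟩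
        have hf2 : f ∈ LR₂ := (Finset.mem_inter.mp (hcapR ▸ hcap)).2
        exact hfcap (hCap ▸ Finset.mem_inter.mpr
          ⟨h1, hL₂split ▸ Finset.mem_union_left _ hf2⟩)
      · right; left; exact hvd _ hS
    · rcases Finset.mem_union.mp (hL₂split ▸ h2) with hR | hS
      · left
        apply hvd
        rw [hdelR]
        refine Finset.mem_sdiff.mpr ⟨Finset.mem_union_right _ hR, fun hcap => ?_⟩
        have hf1 : f ∈ LR₁ := (Finset.mem_inter.mp (hcapR ▸ hcap)).1
        exact hfcap (hCap ▸ Finset.mem_inter.mpr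
          ⟨hL₁split ▸ Finset.mem_union_left _ hf1, h2⟩)
      · right; right; exact hvd _ hS
  -- the counting inequality
  have hvcount : S₁.card + S₂.card + 2 * (vertsOf Del).card
      ≤ 2 * ((vertsOf delR).card + (vertsOf LS₁).card + (vertsOf LS₂).card) := by
    have hsum : ∀ A : Finset (Fin n), A.card = ∑ u : Fin n, (if u ∈ A then 1 else 0) := by
      intro A
      rw [Finset.sum_ite_mem, Finset.univ_inter, Finset.sum_const, smul_eq_mul, mul_one]
    have hpt : ∀ u : Fin n,
        (if u ∈ S₁.image φ₁ then 1 else 0) + (if u ∈ S₂.image φ₂ then 1 else 0)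
          + 2 * (if u ∈ vertsOf Del then 1 else 0)
        ≤ 2 * ((if u ∈ vertsOf delR then 1 else 0) + (if u ∈ vertsOf LS₁ then 1 else 0)
          + (if u ∈ vertsOf LS₂ then 1 else 0)) := by
      intro u
      have hLHS : (if u ∈ S₁.image φ₁ then 1 else 0) + (if u ∈ S₂.image φ₂ then 1 else 0)
          + 2 * (if u ∈ vertsOf Del then 1 else 0) ≤ 4 := by
        split_ifs <;> omega
      by_cases h1 : u ∈ S₁.image φ₁
      · obtain ⟨C, hC, rfl⟩ := Finset.mem_image.mp h1
        obtain ⟨ha, hb⟩ := hkey₁ C hC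
        refine le_trans hLHS ?_
        rcases hb with hb | hb
        · rw [if_pos ha, if_pos hb]; split_ifs <;> omega
        · rw [if_pos ha, if_pos hb]; split_ifs <;> omega
      · by_cases h2 : u ∈ S₂.image φ₂
        · obtain ⟨C, hC, rfl⟩ := Finset.mem_image.mp h2
          obtain ⟨ha, hb⟩ := hkey₂ C hC
          refine le_trans hLHS ?_
          rcases hb with hb | hb
          · rw [if_pos ha, if_pos hb]; split_ifs <;> omega
          · rw [if_pos ha, if_pos hb]; split_ifs <;> omega
        · rw [if_neg h1, if_neg h2]
          by_cases hd : u ∈ vertsOf Del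
          · rcases hK1 u hd with h | h | h <;>
              · rw [if_pos hd, if_pos h]; split_ifs <;> omega
          · rw [if_neg hd]; omega
      
    calc S₁.card + S₂.card + 2 * (vertsOf Del).card
        = ∑ u : Fin n, ((if u ∈ S₁.image φ₁ then 1 else 0)
            + (if u ∈ S₂.image φ₂ then 1 else 0)
            + 2 * (if u ∈ vertsOf Del then 1 else 0)) := by
          rw [Finset.sum_add_distrib, Finset.sum_add_distrib, ← Finset.mul_sum,
            ← hsum, ← hsum, ← hsum, Finset.card_image_of_injOn hinj₁,
            Finset.card_image_of_injOn hinj₂]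
      _ ≤ ∑ u : Fin n, 2 * ((if u ∈ vertsOf delR then 1 else 0)
            + (if u ∈ vertsOf LS₁ then 1 else 0)
            + (if u ∈ vertsOf LS₂ then 1 else 0)) :=
          Finset.sum_le_sum fun u _ => hpt u
      _ = 2 * ((vertsOf delR).card + (vertsOf LS₁).card + (vertsOf LS₂).card) := by
          rw [← Finset.mul_sum, Finset.sum_add_distrib, Finset.sum_add_distrib,
            ← hsum, ← hsum, ← hsum]
  -- final assembly
  obtain ⟨t, ht⟩ : ∃ t, Cap.card = capR.card + t := ⟨Cap.card - capR.card, by omega⟩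
  have hlamsplit : lam ^ delR.card * lam ^ LS₁.card * lam ^ LS₂.card
      = (lam ^ 2) ^ t * lam ^ Del.card := by
    rw [← pow_add, ← pow_add, ← pow_mul, ← pow_add]
    congr 1
    omega
  have hrsplit : r ^ (vertsOf delR).card * r ^ (vertsOf LS₁).card * r ^ (vertsOf LS₂).card
      = r ^ ((vertsOf delR).card + (vertsOf LS₁).card + (vertsOf LS₂).card) := by
    rw [← pow_add, ← pow_add]
  have hlam_sq : lam ^ 2 ≤ (1/4:ℝ) := by nlinarith
  have step_r : r ^ ((vertsOf delR).card + (vertsOf LS₁).card + (vertsOf LS₂).card)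
      ≤ r ^ (((S₁.card + S₂.card : ℕ) : ℝ) / 2) * r ^ (vertsOf Del).card := by
    rw [← Real.rpow_natCast r ((vertsOf delR).card + (vertsOf LS₁).card + (vertsOf LS₂).card),
      ← Real.rpow_natCast r (vertsOf Del).card, ← Real.rpow_add hr0]
    apply Real.rpow_le_rpow_of_exponent_ge hr0 hr1
    have : ((vertsOf Del).card * 2 + (S₁.card + S₂.card) : ℝ)
        ≤ (((vertsOf delR).card + (vertsOf LS₁).card + (vertsOf LS₂).card) * 2 : ℕ) := by
      exact_mod_cast (by omega : (vertsOf Del).card * 2 + (S₁.card + S₂.card)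
        ≤ ((vertsOf delR).card + (vertsOf LS₁).card + (vertsOf LS₂).card) * 2)
    push_cast at this ⊢
    linarith
  constructor
  · rw [hEA, hEB, hEC]
    have h14 : (0:ℝ) ≤ (1/4:ℝ) ^ capR.card := by positivity
    have hrp : ∀ m : ℕ, (0:ℝ) ≤ r ^ m := fun m => pow_nonneg hr0.le m
    have hlp : ∀ m : ℕ, (0:ℝ) ≤ lam ^ m := fun m => pow_nonneg hlam0 m
    exact mul_nonneg (mul_nonneg (mul_nonneg h14 (mul_nonneg (hlp _) (hrp _)))
      (mul_nonneg (hlp _) (hrp _))) (mul_nonneg (hlp _) (hrp _))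
  · rw [hEA, hEB, hEC, hEfull]
    have hrp : ∀ m : ℕ, (0:ℝ) ≤ r ^ m := fun m => pow_nonneg hr0.le m
    have hlp : ∀ m : ℕ, (0:ℝ) ≤ lam ^ m := fun m => pow_nonneg hlam0 m
    calc (1/4:ℝ) ^ capR.card * (lam ^ delR.card * r ^ (vertsOf delR).card)
          * (lam ^ LS₁.card * r ^ (vertsOf LS₁).card)
          * (lam ^ LS₂.card * r ^ (vertsOf LS₂).card)
        = ((1/4:ℝ) ^ capR.card * ((lam ^ 2) ^ t * lam ^ Del.card))
            * (r ^ ((vertsOf delR).card + (vertsOf LS₁).card + (vertsOf LS₂).card)) := by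
          rw [← hlamsplit, ← hrsplit]; ring
      _ ≤ ((1/4:ℝ) ^ capR.card * ((1/4:ℝ) ^ t * lam ^ Del.card))
            * (r ^ (((S₁.card + S₂.card : ℕ) : ℝ) / 2) * r ^ (vertsOf Del).card) := by
          apply mul_le_mul _ step_r (hrp _) _
          · apply mul_le_mul_of_nonneg_left _ (by positivity : (0:ℝ) ≤ (1/4:ℝ) ^ capR.card)
            exact mul_le_mul_of_nonneg_right (pow_le_pow_left₀ (sq_nonneg lam) hlam_sq t)
              (hlp _)
          · refine mul_nonneg (by positivity) (mul_nonneg (by positivity) (hlp _))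
      _ = r ^ (((S₁.card + S₂.card : ℕ) : ℝ) / 2)
            * ((1/4:ℝ) ^ Cap.card * (lam ^ Del.card * r ^ (vertsOf Del).card)) := by
          rw [ht, pow_add]
          ring
end LDLB
end
end

section
/- Let G^{(1)} = (V^{(1)},E^{(1)}) and G^{(2)} = (V^{(2)},E^{(2)}) be templates. For subsets Ū₁ ⊆ V^{(1)}, Ū₂ ⊆ V^{(2)} and a matching M̲, define the shadow class 𝓜_shadow(Ū₁,Ū₂,M̲) := {M ∈ 𝓜 : U^{(1)}(M) = Ū₁, U^{(2)}(M) = Ū₂, M_SM(M) = M̲}. Then |𝓜_shadow(Ū₁,Ū₂,M̲)| ≤ min(|Aut(G^{(1)})|, |Aut(G^{(2)})|), where Aut(G) denotes the automorphism group of the graph G. -/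
open Finset MeasureTheory
open scoped Classical

noncomputable section

namespace LDLB

section Core

variable {m₁ m₂ : ℕ} {Mb A B : Finset (Fin m₁ × Fin m₂)} {v : Fin m₁}

lemma IsMatching.snd_eq' (h : IsMatching A) {p p' : Fin m₁ × Fin m₂}
    (hp : p ∈ A) (hp' : p' ∈ A) (h1 : p.1 = p'.1) : p.2 = p'.2 :=
  (h p hp p' hp').1 h1

lemma IsMatching.fst_eq' (h : IsMatching A) {p p' : Fin m₁ × Fin m₂}
    (hp : p ∈ A) (hp' : p' ∈ A) (h2 : p.2 = p'.2) : p.1 = p'.1 :=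
  (h p hp p' hp').2 h2

/-- Auxiliary condition for the transfer map. -/
def dcondS (Mb A B : Finset (Fin m₁ × Fin m₂)) (v : Fin m₁) : Prop :=
  ∃ qp : (Fin m₁ × Fin m₂) × (Fin m₁ × Fin m₂),
    qp.1 ∈ B ∧ qp.2 ∈ A ∧ qp.2.1 = v ∧ qp.2 ∉ Mb ∧ qp.1.2 = qp.2.2

/-- The transfer map on first-coordinate nodes. -/
noncomputable def sigf (Mb A B : Finset (Fin m₁ × Fin m₂)) (v : Fin m₁) : Fin m₁ :=
  if h : dcondS Mb A B v then h.choose.1.1 else v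

def AcondS (Mb A : Finset (Fin m₁ × Fin m₂)) (v : Fin m₁) : Prop :=
  ∃ w, (v, w) ∈ A ∧ (v, w) ∉ Mb

/-- Hypotheses relating two matchings in the same shadow class. -/
structure ShHyp (Mb A B : Finset (Fin m₁ × Fin m₂)) : Prop where
  hAm : IsMatching A
  hBm : IsMatching B
  hMbA : Mb ⊆ A
  hMbB : Mb ⊆ B
  hU1 : ∀ v, (∃ p ∈ A, p.1 = v) ↔ (∃ p ∈ B, p.1 = v)
  hU2 : ∀ w, (∃ p ∈ A, p.2 = w) ↔ (∃ p ∈ B, p.2 = w)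

lemma ShHyp.symm (H : ShHyp Mb A B) : ShHyp Mb B A :=
  ⟨H.hBm, H.hAm, H.hMbB, H.hMbA, fun v => (H.hU1 v).symm, fun w => (H.hU2 w).symm⟩

lemma Acond_of_dcond (h : dcondS Mb A B v) : AcondS Mb A v := by
  obtain ⟨qp, _, h2, h3, h4, _⟩ := h
  exact ⟨qp.2.2, by rw [← h3]; exact h2, by rw [← h3]; exact h4⟩

lemma sigf_fix (hna : ¬ AcondS Mb A v) : sigf Mb A B v = v :=
  dif_neg (fun hd => hna (Acond_of_dcond hd))

lemma sigf_mem (H : ShHyp Mb A B) {w : Fin m₂} (hvw : (v, w) ∈ A) (hnb : (v, w) ∉ Mb) :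
    (sigf Mb A B v, w) ∈ B ∧ (sigf Mb A B v, w) ∉ Mb := by
  obtain ⟨q, hqB, hqw⟩ := (H.hU2 w).mp ⟨(v, w), hvw, rfl⟩
  have hd : dcondS Mb A B v := ⟨(q, (v, w)), hqB, hvw, rfl, hnb, hqw⟩
  rw [sigf, dif_pos hd]
  obtain ⟨h1, h2, h3, h4, h5⟩ := hd.choose_spec
  set qp := hd.choose with hqp
  have h6 : qp.2.2 = w := H.hAm.snd_eq' h2 hvw h3
  have hqeq : qp.1 = (qp.1.1, w) := by
    rw [← h6, ← h5]
  have hqB' : (qp.1.1, w) ∈ B := by rw [← hqeq]; exact h1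
  refine ⟨hqB', fun hmem => ?_⟩
  have hA' : (qp.1.1, w) ∈ A := H.hMbA hmem
  have : qp.1.1 = v := H.hAm.fst_eq' hA' hvw rfl
  rw [this] at hmem
  exact hnb hmem

lemma Acond_trans (H : ShHyp Mb A B) (h : AcondS Mb A v) : AcondS Mb B v := by
  obtain ⟨w, hA, hnb⟩ := h
  obtain ⟨q, hqB, hq1⟩ := (H.hU1 v).mp ⟨(v, w), hA, rfl⟩
  have hq : (v, q.2) ∈ B := by rw [← hq1]; exact hqB
  refine ⟨q.2, hq, fun hmem => ?_⟩
  have hA' : (v, q.2) ∈ A := H.hMbA hmem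
  have : q.2 = w := H.hAm.snd_eq' hA' hA rfl
  rw [this] at hmem
  exact hnb hmem

lemma sigf_leftInv (H : ShHyp Mb A B) (v : Fin m₁) :
    sigf Mb B A (sigf Mb A B v) = v := by
  by_cases hA : AcondS Mb A v
  · obtain ⟨w, hvw, hnb⟩ := hA
    obtain ⟨h1, h2⟩ := sigf_mem H hvw hnb
    obtain ⟨h3, _⟩ := sigf_mem H.symm h1 h2
    exact H.hAm.fst_eq' h3 hvw rfl
  · have hB : ¬ AcondS Mb B v := fun h => hA (Acond_trans H.symm h)
    rw [sigf_fix hA, sigf_fix hB]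

lemma mem_iff_det (H : ShHyp Mb A B) (p : Fin m₁ × Fin m₂) :
    p ∈ A ↔ p ∈ Mb ∨
      ((sigf Mb A B p.1, p.2) ∈ B ∧ (sigf Mb A B p.1, p.2) ∉ Mb) := by
  constructor
  · intro hp
    by_cases hb : p ∈ Mb
    · exact Or.inl hb
    · exact Or.inr (sigf_mem H hp hb)
  · rintro (hb | ⟨h1, h2⟩)
    · exact H.hMbA hb
    · by_cases ha : AcondS Mb A p.1
      · obtain ⟨w, hw, hnb⟩ := ha
        obtain ⟨h3, _⟩ := sigf_mem H hw hnb
        have hpw : p.2 = w := H.hBm.snd_eq' h1 h3 rfl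
        have : p = (p.1, w) := by rw [← hpw]
        rw [this]; exact hw
      · have hfix : sigf Mb A B p.1 = p.1 := sigf_fix ha
        rw [hfix] at h1 h2
        exact absurd (Acond_trans H.symm ⟨p.2, h1, h2⟩) ha

end Core

section Shadow

variable {G₁ G₂ : Graf}

lemma pairPerfect_of_not_sm {Mm : Finset (Fin G₁.m × Fin G₂.m)} {p : Fin G₁.m × Fin G₂.m}
    (hp : p ∈ Mm) (hnb : p ∉ Msm G₁ G₂ Mm) : pairPerfect G₁ G₂ Mm p := by
  by_contra h
  exact hnb (Finset.mem_filter.mpr ⟨hp, h⟩)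

lemma matched1_norm {Mm : Finset (Fin G₁.m × Fin G₂.m)} {u v : Fin G₁.m}
    (h : matched1 G₁ G₂ Mm s(u, v)) :
    ∃ pu ∈ Mm, ∃ pv ∈ Mm, pu.1 = u ∧ pv.1 = v ∧ s(pu.2, pv.2) ∈ G₂.Ed := by
  obtain ⟨p₁, hp₁, p₂, hp₂, heq, hE⟩ := h
  rcases Sym2.eq_iff.mp heq with ⟨h1, h2⟩ | ⟨h1, h2⟩
  · exact ⟨p₁, hp₁, p₂, hp₂, h1.symm, h2.symm, hE⟩
  · exact ⟨p₂, hp₂, p₁, hp₁, h1.symm, h2.symm, by rw [Sym2.eq_swap]; exact hE⟩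

lemma matched2_norm {Mm : Finset (Fin G₁.m × Fin G₂.m)} {u v : Fin G₂.m}
    (h : matched2 G₁ G₂ Mm s(u, v)) :
    ∃ pu ∈ Mm, ∃ pv ∈ Mm, pu.2 = u ∧ pv.2 = v ∧ s(pu.1, pv.1) ∈ G₁.Ed := by
  obtain ⟨p₁, hp₁, p₂, hp₂, heq, hE⟩ := h
  rcases Sym2.eq_iff.mp heq with ⟨h1, h2⟩ | ⟨h1, h2⟩
  · exact ⟨p₁, hp₁, p₂, hp₂, h1.symm, h2.symm, hE⟩
  · exact ⟨p₂, hp₂, p₁, hp₁, h1.symm, h2.symm, by rw [Sym2.eq_swap]; exact hE⟩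

/-- Perfect-pair hypotheses for the edge lemma. -/
def PPh (Mb Mm : Finset (Fin G₁.m × Fin G₂.m)) : Prop :=
  ∀ p ∈ Mm, p ∉ Mb → pairPerfect G₁ G₂ Mm p

lemma step2 {Mb A B : Finset (Fin G₁.m × Fin G₂.m)} (H : ShHyp Mb A B)
    (hPA : PPh Mb A) (hPB : PPh Mb B) {u v : Fin G₁.m} (he : s(u, v) ∈ G₁.Ed)
    {w : Fin G₂.m} (huw : (u, w) ∈ A) (hnb : (u, w) ∉ Mb) :
    s(sigf Mb A B u, sigf Mb A B v) ∈ G₁.Ed := by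
  have hpp := hPA _ huw hnb
  have hm1 : matched1 G₁ G₂ A s(u, v) := hpp.1 _ he (Sym2.mem_mk_left u v)
  obtain ⟨pu, hpu, pv, hpv, hu1, hv1, hE2⟩ := matched1_norm hm1
  have hw : pu.2 = w := H.hAm.snd_eq' hpu huw hu1
  obtain ⟨hσB, hσnb⟩ := sigf_mem H huw hnb
  have hpp2 := hPB _ hσB hσnb
  have hE2' : s(w, pv.2) ∈ G₂.Ed := by rw [← hw]; exact hE2
  have hm2 : matched2 G₁ G₂ B s(w, pv.2) := hpp2.2 _ hE2' (Sym2.mem_mk_left w pv.2)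
  obtain ⟨qu, hqu, qv, hqv, hq2w, hq2v, hE1⟩ := matched2_norm hm2
  have hqu1 : qu.1 = sigf Mb A B u := H.hBm.fst_eq' hqu hσB hq2w
  have hpvA : (v, pv.2) ∈ A := by rw [← hv1]; exact hpv
  have hqv1 : qv.1 = sigf Mb A B v := by
    by_cases hb : (v, pv.2) ∈ Mb
    · have hBmem : (v, pv.2) ∈ B := H.hMbB hb
      have h1 : qv.1 = v := H.hBm.fst_eq' hqv hBmem hq2v
      have h2 : sigf Mb A B v = v := by
        refine sigf_fix ?_
        rintro ⟨w', hw', hnb'⟩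
        have hww : w' = pv.2 := H.hAm.snd_eq' (p := (v, w')) (p' := (v, pv.2)) hw' hpvA rfl
        rw [hww] at hnb'
        exact hnb' hb
      rw [h1, h2]
    · obtain ⟨h1, _⟩ := sigf_mem H hpvA hb
      exact H.hBm.fst_eq' hqv h1 hq2v
  rw [← hqu1, ← hqv1]
  exact hE1

lemma sigf_edge {Mb A B : Finset (Fin G₁.m × Fin G₂.m)} (H : ShHyp Mb A B)
    (hPA : PPh Mb A) (hPB : PPh Mb B) :
    ∀ e ∈ G₁.Ed, e.map (sigf Mb A B) ∈ G₁.Ed := by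
  intro e he
  induction e using Sym2.ind with
  | _ u v =>
    rw [Sym2.map_pair_eq]
    by_cases hu : AcondS Mb A u
    · obtain ⟨w, h1, h2⟩ := hu
      exact step2 H hPA hPB he h1 h2
    · by_cases hv : AcondS Mb A v
      · obtain ⟨w, h1, h2⟩ := hv
        rw [Sym2.eq_swap]
        exact step2 H hPA hPB (by rw [Sym2.eq_swap]; exact he) h1 h2
      · rw [sigf_fix hu, sigf_fix hv]
        exact he

/-- The permutation induced by two matchings in the same shadow class. -/
noncomputable def sigPerm {m₁ m₂ : ℕ} (Mb A B : Finset (Fin m₁ × Fin m₂)) :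
    Equiv.Perm (Fin m₁) :=
  if h : Function.Bijective (sigf Mb A B) then Equiv.ofBijective _ h else 1

lemma sigPerm_coe {m₁ m₂ : ℕ} {Mb A B : Finset (Fin m₁ × Fin m₂)} (H : ShHyp Mb A B) :
    ⇑(sigPerm Mb A B) = sigf Mb A B := by
  have hinj : Function.Injective (sigf Mb A B) :=
    Function.LeftInverse.injective (g := sigf Mb B A) (sigf_leftInv H)
  have hbij : Function.Bijective (sigf Mb A B) :=
    Finite.injective_iff_bijective.mp hinj
  rw [sigPerm, dif_pos hbij]
  rfl

lemma sigf_comp_id {m₁ m₂ : ℕ} {Mb A B : Finset (Fin m₁ × Fin m₂)} (H : ShHyp Mb A B) :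
    (sigf Mb B A) ∘ (sigf Mb A B) = id :=
  funext fun v => sigf_leftInv H v

/-- Membership facts extracted from the shadow class. -/
lemma shhyp_of_class {U1 : Finset (Fin G₁.m)} {U2 : Finset (Fin G₂.m)}
    {Mb A B : Finset (Fin G₁.m × Fin G₂.m)}
    (hA : IsMatching A ∧ Uset1 G₁ G₂ A = U1 ∧ Uset2 G₁ G₂ A = U2 ∧ Msm G₁ G₂ A = Mb)
    (hB : IsMatching B ∧ Uset1 G₁ G₂ B = U1 ∧ Uset2 G₁ G₂ B = U2 ∧ Msm G₁ G₂ B = Mb) :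
    ShHyp Mb A B ∧ PPh Mb A ∧ PPh Mb B := by
  obtain ⟨hAm, hAU1, hAU2, hAsm⟩ := hA
  obtain ⟨hBm, hBU1, hBU2, hBsm⟩ := hB
  have hMbA : Mb ⊆ A := by rw [← hAsm]; exact Finset.filter_subset _ _
  have hMbB : Mb ⊆ B := by rw [← hBsm]; exact Finset.filter_subset _ _
  have hmem1 : ∀ (Mm : Finset (Fin G₁.m × Fin G₂.m)) (v : Fin G₁.m),
      v ∉ Uset1 G₁ G₂ Mm ↔ ∃ p ∈ Mm, p.1 = v := by
    intro Mm v
    simp only [Uset1, Finset.mem_filter, Finset.mem_univ, true_and]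
    push_neg
    rfl
  have hmem2 : ∀ (Mm : Finset (Fin G₁.m × Fin G₂.m)) (w : Fin G₂.m),
      w ∉ Uset2 G₁ G₂ Mm ↔ ∃ p ∈ Mm, p.2 = w := by
    intro Mm w
    simp only [Uset2, Finset.mem_filter, Finset.mem_univ, true_and]
    push_neg
    rfl
  refine ⟨⟨hAm, hBm, hMbA, hMbB, fun v => ?_, fun w => ?_⟩, ?_, ?_⟩
  · rw [← hmem1 A v, ← hmem1 B v, hAU1, hBU1]
  · rw [← hmem2 A w, ← hmem2 B w, hAU2, hBU2]
  · intro p hp hnb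
    refine pairPerfect_of_not_sm hp ?_
    rw [hAsm]; exact hnb
  · intro p hp hnb
    refine pairPerfect_of_not_sm hp ?_
    rw [hBsm]; exact hnb

lemma class_card_le_aut1 (G₁ G₂ : Graf) (U1 : Finset (Fin G₁.m)) (U2 : Finset (Fin G₂.m))
    (Mb : Finset (Fin G₁.m × Fin G₂.m)) :
    ((Finset.univ : Finset (Finset (Fin G₁.m × Fin G₂.m))).filter
        (fun Mm => IsMatching Mm ∧ Uset1 G₁ G₂ Mm = U1 ∧ Uset2 G₁ G₂ Mm = U2 ∧
          Msm G₁ G₂ Mm = Mb)).card ≤ G₁.autCard := by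
  set S := (Finset.univ : Finset (Finset (Fin G₁.m × Fin G₂.m))).filter
      (fun Mm => IsMatching Mm ∧ Uset1 G₁ G₂ Mm = U1 ∧ Uset2 G₁ G₂ Mm = U2 ∧
        Msm G₁ G₂ Mm = Mb) with hS
  rcases S.eq_empty_or_nonempty with h | ⟨B, hB⟩
  · rw [h]; simp
  · have hBc := (Finset.mem_filter.mp hB).2
    show S.card ≤ (Finset.univ.filter (fun σ : Equiv.Perm (Fin G₁.m) =>
      ∀ e : Sym2 (Fin G₁.m), e.map σ ∈ G₁.Ed ↔ e ∈ G₁.Ed)).card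
    apply Finset.card_le_card_of_injOn (fun A => sigPerm Mb A B)
    · intro A hA
      dsimp only
      have hAc := (Finset.mem_filter.mp hA).2
      obtain ⟨H, hPA, hPB⟩ := shhyp_of_class hAc hBc
      simp only [Finset.mem_coe, Finset.mem_filter, Finset.mem_univ, true_and]
      intro e
      rw [sigPerm_coe H]
      constructor
      · intro hme
        have h2 := sigf_edge H.symm hPB hPA _ hme
        rw [Sym2.map_map, sigf_comp_id H, Sym2.map_id] at h2
        exact h2
      · intro hme
        exact sigf_edge H hPA hPB _ hme
    · intro A hA A' hA' hEq
      dsimp only at hEq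
      have hAc := (Finset.mem_filter.mp hA).2
      have hA'c := (Finset.mem_filter.mp hA').2
      obtain ⟨H, _, _⟩ := shhyp_of_class hAc hBc
      obtain ⟨H', _, _⟩ := shhyp_of_class hA'c hBc
      have hfun : sigf Mb A B = sigf Mb A' B := by
        rw [← sigPerm_coe H, ← sigPerm_coe H', hEq]
      ext p
      rw [mem_iff_det H p, mem_iff_det H' p, hfun]

end Shadow



section Flip

variable {G₁ G₂ : Graf}

/-- Swap the two sides of a matching. -/
def flipM {m₁ m₂ : ℕ} (Mm : Finset (Fin m₁ × Fin m₂)) : Finset (Fin m₂ × Fin m₁) :=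
  Mm.image Prod.swap

lemma mem_flipM {m₁ m₂ : ℕ} {Mm : Finset (Fin m₁ × Fin m₂)} {p : Fin m₂ × Fin m₁} :
    p ∈ flipM Mm ↔ p.swap ∈ Mm := by
  constructor
  · intro h
    obtain ⟨a, ha, rfl⟩ := Finset.mem_image.mp h
    simpa using ha
  · intro h
    exact Finset.mem_image.mpr ⟨p.swap, h, by simp⟩

lemma flipM_injective {m₁ m₂ : ℕ} {Mm Mm' : Finset (Fin m₁ × Fin m₂)}
    (h : flipM Mm = flipM Mm') : Mm = Mm' := by
  ext p
  have h1 : p.swap ∈ flipM Mm ↔ p.swap ∈ flipM Mm' := by rw [h]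
  simpa [mem_flipM] using h1

lemma isMatching_flipM {Mm : Finset (Fin G₁.m × Fin G₂.m)} (h : IsMatching Mm) :
    IsMatching (flipM Mm) := by
  intro p hp p' hp'
  rw [mem_flipM] at hp hp'
  exact (h _ hp _ hp').symm

lemma matched1_flipM {Mm : Finset (Fin G₁.m × Fin G₂.m)} {e : Sym2 (Fin G₂.m)} :
    matched1 G₂ G₁ (flipM Mm) e ↔ matched2 G₁ G₂ Mm e := by
  constructor
  · rintro ⟨p, hp, p', hp', he, hE⟩
    rw [mem_flipM] at hp hp'
    exact ⟨p.swap, hp, p'.swap, hp', he, hE⟩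
  · rintro ⟨p, hp, p', hp', he, hE⟩
    exact ⟨p.swap, mem_flipM.mpr (by simpa), p'.swap, mem_flipM.mpr (by simpa), he, hE⟩

lemma matched2_flipM {Mm : Finset (Fin G₁.m × Fin G₂.m)} {e : Sym2 (Fin G₁.m)} :
    matched2 G₂ G₁ (flipM Mm) e ↔ matched1 G₁ G₂ Mm e := by
  constructor
  · rintro ⟨p, hp, p', hp', he, hE⟩
    rw [mem_flipM] at hp hp'
    exact ⟨p.swap, hp, p'.swap, hp', he, hE⟩
  · rintro ⟨p, hp, p', hp', he, hE⟩
    exact ⟨p.swap, mem_flipM.mpr (by simpa), p'.swap, mem_flipM.mpr (by simpa), he, hE⟩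

lemma pairPerfect_flipM {Mm : Finset (Fin G₁.m × Fin G₂.m)} {p : Fin G₂.m × Fin G₁.m} :
    pairPerfect G₂ G₁ (flipM Mm) p ↔ pairPerfect G₁ G₂ Mm p.swap := by
  unfold pairPerfect
  simp only [matched1_flipM, matched2_flipM]
  exact ⟨fun ⟨a, b⟩ => ⟨b, a⟩, fun ⟨a, b⟩ => ⟨b, a⟩⟩

lemma msm_flipM {Mm : Finset (Fin G₁.m × Fin G₂.m)} :
    Msm G₂ G₁ (flipM Mm) = flipM (Msm G₁ G₂ Mm) := by
  ext p
  simp only [Msm, Finset.mem_filter, mem_flipM, pairPerfect_flipM]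

lemma uset1_flipM {Mm : Finset (Fin G₁.m × Fin G₂.m)} :
    Uset1 G₂ G₁ (flipM Mm) = Uset2 G₁ G₂ Mm := by
  ext v
  simp only [Uset1, Uset2, Finset.mem_filter, Finset.mem_univ, true_and]
  constructor
  · intro h p hp
    exact h p.swap (mem_flipM.mpr (by simpa))
  · intro h p hp
    exact h p.swap (mem_flipM.mp hp)

lemma uset2_flipM {Mm : Finset (Fin G₁.m × Fin G₂.m)} :
    Uset2 G₂ G₁ (flipM Mm) = Uset1 G₁ G₂ Mm := by
  ext v
  simp only [Uset1, Uset2, Finset.mem_filter, Finset.mem_univ, true_and]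
  constructor
  · intro h p hp
    exact h p.swap (mem_flipM.mpr (by simpa))
  · intro h p hp
    exact h p.swap (mem_flipM.mp hp)

end Flip

/-- the number of matchings with a prescribed shadow is at most the minimum of
the two automorphism group sizes. -/
theorem shadow_count_le_aut (G₁ G₂ : Graf) (h₁ : G₁.IsTemplate) (h₂ : G₂.IsTemplate)
    (U1 : Finset (Fin G₁.m)) (U2 : Finset (Fin G₂.m))
    (Mb : Finset (Fin G₁.m × Fin G₂.m)) (hMb : IsMatching Mb) :
    ((Finset.univ : Finset (Finset (Fin G₁.m × Fin G₂.m))).filter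
        (fun Mm => IsMatching Mm ∧ Uset1 G₁ G₂ Mm = U1 ∧ Uset2 G₁ G₂ Mm = U2 ∧
          Msm G₁ G₂ Mm = Mb)).card ≤
      min G₁.autCard G₂.autCard := by
  refine le_min (class_card_le_aut1 G₁ G₂ U1 U2 Mb) ?_
  refine le_trans ?_ (class_card_le_aut1 G₂ G₁ U2 U1 (flipM Mb))
  apply Finset.card_le_card_of_injOn flipM
  · intro Mm hMm
    simp only [Finset.mem_coe, Finset.mem_filter, Finset.mem_univ, true_and] at hMm ⊢
    obtain ⟨h1, h2, h3, h4⟩ := hMm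
    exact ⟨isMatching_flipM h1, by rw [uset1_flipM, h3], by rw [uset2_flipM, h2],
      by rw [msm_flipM, h4]⟩
  · intro Mm _ Mm' _ hEq
    exact flipM_injective hEq


end LDLB
end
end
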